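/- arXiv:2406.07468 — 4 statements merged into one kernel-verified Lean document; each statement's English description precedes it below -/
import Mathlib

section
/- Let n ≥ 4 be even, q = 2^n, α ∈ 𝔽_q^*, and let ω be a fixed element of 𝔽_4 \ 𝔽_2 regarded as an element of 𝔽_q. If n ≡ 2 (mod 4), then ∇_{F_{0,α}}(a,x) ≤ 4 for all a ∈ 𝔽_q^* and x ∈ 𝔽_q. If n ≡ 0 (mod 4), then ∇_{F_{0,α}}(a,x) = 6 holds if and only if a ∈ {αω, αω²} and x belongs to the set {0, α, αω, αω², aρ, aρ + a}, where ρ ∈ 𝔽_q satisfies ρ² + ρ = ω when a = αω, and ρ² + ρ = ω² when a = αω². -/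
namespace APNPaper

open Finset

variable {F : Type*} [Field F] [Fintype F] [DecidableEq F]

/-- `δ_G(a,b)`: the number of `x` with `D_aG(x) = G(x) + G(x+a) = b`. -/
def delta (G : F → F) (a b : F) : ℕ :=
  (Finset.univ.filter fun x : F => G x + G (x + a) = b).card

/-- `∇_G(a,x) = δ_G(a, D_aG(x))`. -/
def nabla (G : F → F) (a x : F) : ℕ := delta G a (G x + G (x + a))

/-- `G` is almost perfect nonlinear. -/
def IsAPN (G : F → F) : Prop := ∀ a : F, a ≠ 0 → ∀ b : F, delta G a b ≤ 2

/-- The derivative `D_aG` is 2-to-1, i.e. `G` satisfies property `(p_a)`. -/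
def TwoToOne (G : F → F) (a : F) : Prop :=
  ∀ b : F, delta G a b = 0 ∨ delta G a b = 2

instance instDecTwoToOne (G : F → F) (a : F) : Decidable (TwoToOne G a) := by
  unfold TwoToOne; infer_instance

/-- The row spectrum `R-Spec_q(G)`. -/
def RSpec (G : F → F) : Finset F :=
  (Finset.univ.erase (0 : F)).filter fun a => TwoToOne G a

/-- `S_a = {x : ∇_G(a,x) = 2}`. -/
def Sset (G : F → F) (a : F) : Finset F :=
  Finset.univ.filter fun x : F => nabla G a x = 2

/-- `w_{S_a^c} = Σ_{b : δ_G(a,b) > 2} (δ_G(a,b)/2)²`. -/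
def wS (G : F → F) (a : F) : ℤ :=
  ∑ b : F, if 2 < delta G a b then ((delta G a b / 2 : ℕ) : ℤ) ^ 2 else 0

/-- `χ_a = 1` if `S_a = 𝔽_q`, and `0` otherwise. -/
def chi (G : F → F) (a : F) : ℤ :=
  if Sset G a = Finset.univ then 1 else 0

/-- `𝒟(G) = Σ_{a ≠ 0} (|S_a| − w_{S_a^c} + χ_a)`. -/
def Dscr (G : F → F) : ℤ :=
  ∑ a ∈ Finset.univ.erase (0 : F), (((Sset G a).card : ℤ) - wS G a + chi G a)

/-- The APN-defect `APN-def(G) = q² − 1 − 𝒟(G)`. -/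
def APNdef (G : F → F) : ℤ := (Fintype.card F : ℤ) ^ 2 - 1 - Dscr G

/-- The differential uniformity `δ_G`. -/
def diffUnif (G : F → F) : ℕ :=
  ((Finset.univ.erase (0 : F)) ×ˢ Finset.univ).sup fun p => delta G p.1 p.2

/-- The set of vanishing flats of `G`. -/
def VF (G : F → F) : Set (Finset F) :=
  {S | ∃ x y z : F, x ≠ y ∧ x ≠ z ∧ y ≠ z ∧
    G x + G y + G z + G (x + y + z) = 0 ∧ S = ({x, y, z, x + y + z} : Finset F)}

/-- The absolute trace `Tr(z) = z + z² + ⋯ + z^{2^{n-1}}` (with values in `{0,1} ⊆ F`). -/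
def Tr (n : ℕ) (z : F) : F := ∑ i ∈ Finset.range n, z ^ (2 ^ i)

/-- The modification `F_{0,α}` of the inverse function: the values of the inverse
function at `0` and `α` are swapped. -/
def Fmod (α : F) : F → F :=
  fun x => if x = 0 then α⁻¹ else if x = α then 0 else x⁻¹


section Aux

set_option linter.unusedSectionVars false

variable [CharP F 2]

lemma add_eq_zero_iff' {x y : F} : x + y = 0 ↔ x = y := by
  rw [CharTwo.add_eq_iff_eq_add, zero_add]

lemma quad_third {p q x y z : F} (hx : x^2 + p*x + q = 0) (hy : y^2 + p*y + q = 0)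
    (hz : z^2 + p*z + q = 0) (hxy : x ≠ y) : z = x ∨ z = y := by
  have hp : p = x + y := by
    have h1 : (x + y) * (x + y + p) = 0 := by
      have h2 : (2:F) = 0 := CharTwo.two_eq_zero
      linear_combination hx + hy + (CharTwo.add_sq x y) - q*h2
    rcases mul_eq_zero.1 h1 with h | h
    · exact absurd (add_eq_zero_iff'.1 h) hxy
    · rw [add_comm] at h
      exact add_eq_zero_iff'.1 h
  have hq : q = x * y := by
    have h2 : (2:F) = 0 := CharTwo.two_eq_zero
    subst hp
    linear_combination hx - (x*y + x^2)*h2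
  have h3 : (z + x) * (z + y) = 0 := by
    subst hp hq
    linear_combination hz
  rcases mul_eq_zero.1 h3 with h | h
  · exact Or.inl (add_eq_zero_iff'.1 h)
  · exact Or.inr (add_eq_zero_iff'.1 h)

lemma Fmod_zero (α : F) : Fmod α 0 = α⁻¹ := by simp [Fmod]

lemma Fmod_self (α : F) : Fmod α α = 0 := by
  by_cases h : α = 0 <;> simp [Fmod, h]

lemma Fmod_app {α x : F} (hx0 : x ≠ 0) (hxα : x ≠ α) : Fmod α x = x⁻¹ := by
  simp [Fmod, hx0, hxα]

lemma nonspecial {α a b x : F} (ha : a ≠ 0) (hx0 : x ≠ 0) (hxa : x ≠ a)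
    (hxα : x ≠ α) (hxαa : x ≠ α + a) (hD : Fmod α x + Fmod α (x + a) = b) :
    b ≠ 0 ∧ x ^ 2 + a * x + a * b⁻¹ = 0 := by
  have c2 : (2:F) = 0 := CharTwo.two_eq_zero
  have hxa0 : x + a ≠ 0 := by rw [Ne, add_eq_zero_iff']; exact hxa
  have hxaα : x + a ≠ α := by
    intro h; exact hxαa (by linear_combination h - a*c2)
  rw [Fmod_app hx0 hxα, Fmod_app hxa0 hxaα] at hD
  have hb : b ≠ 0 := by
    rintro rfl
    have h1 : x⁻¹ = (x + a)⁻¹ := add_eq_zero_iff'.1 hD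
    have h2 : x = x + a := inv_injective h1
    exact ha (by linear_combination -h2)
  refine ⟨hb, ?_⟩
  field_simp at hD
  field_simp
  linear_combination hD - (x - x*a*b - x^2*b)*c2

lemma six_set [Fintype F] {α u ρ a : F} (hα : α ≠ 0) (hu : u^2 = u+1)
    (ha : a = α * u) (hρ : ρ^2 + ρ = u) :
    (Finset.univ.filter fun x : F => Fmod α x + Fmod α (x + a) = (α + a)⁻¹) =
      ({0, a, α, α + a, a*ρ, a*ρ+a} : Finset F) ∧
    delta (Fmod α) a ((α + a)⁻¹) = 6 := by
  have c2 : (2:F) = 0 := CharTwo.two_eq_zero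
  have h1 : (1:F) ≠ 0 := one_ne_zero
  have hu0 : u ≠ 0 := by rintro rfl; simp at hu
  have hu1 : u ≠ 1 := by rintro rfl; rw [one_pow] at hu; exact h1 (by linear_combination -hu)
  have hu3 : u^3 = 1 := by linear_combination u*hu + hu + u*c2
  have ha0 : a ≠ 0 := by rw [ha]; exact mul_ne_zero hα hu0
  have hua : α + a = a * u := by linear_combination (1-u)*ha - α*hu
  have hαa0 : α + a ≠ 0 := by rw [hua]; exact mul_ne_zero ha0 hu0
  have haα : a ≠ α := by
    intro h
    apply hu1
    apply mul_left_cancel₀ hα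
    rw [← ha, h, mul_one]
  have hαa_a : α + a ≠ a := fun h => hα (by linear_combination h)
  have hαa_α : α + a ≠ α := fun h => ha0 (by linear_combination h)
  have hau0 : a * u ≠ 0 := mul_ne_zero ha0 hu0
  have veq : α⁻¹ + a⁻¹ = (α + a)⁻¹ := by
    rw [hua]
    field_simp
    linear_combination u*ha + α*hu + α*u*c2
  have rootne : ∀ σ : F, σ^2 + σ = u → σ ≠ 0 ∧ a*σ ≠ α ∧ a*σ ≠ α + a := by
    intro σ hσ
    have hσ0 : σ ≠ 0 := by rintro rfl; apply hu0; linear_combination -hσ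
    refine ⟨hσ0, ?_, ?_⟩
    · intro h
      have h' : α * (u * σ) = α * 1 := by rw [mul_one]; linear_combination h - σ*ha
      have huσ : u * σ = 1 := mul_left_cancel₀ hα h'
      apply hu0
      linear_combination u^2*hσ - (u*σ+1)*huσ - u*huσ + hu3
    · intro h
      rw [hua] at h
      have hσu : σ = u := mul_left_cancel₀ ha0 h
      apply hu0
      rw [hσu] at hσ
      have hu2 : u^2 = 0 := by linear_combination hσ
      exact pow_eq_zero_iff two_ne_zero |>.1 hu2
  have rootD : ∀ σ : F, σ^2 + σ = u →
      Fmod α (a*σ) + Fmod α (a*σ + a) = (α+a)⁻¹ := by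
    intro σ hσ
    obtain ⟨hσ0, hσα, hσαa⟩ := rootne σ hσ
    have hσ' : (σ+1)^2 + (σ+1) = u := by linear_combination hσ + (σ+1)*c2
    obtain ⟨hσ0', hσα', _⟩ := rootne (σ+1) hσ'
    have e1 : a*σ + a = a*(σ+1) := by ring
    have hx0 : a*σ ≠ 0 := mul_ne_zero ha0 hσ0
    have hy0 : a*σ + a ≠ 0 := by rw [e1]; exact mul_ne_zero ha0 hσ0'
    have hyα : a*σ + a ≠ α := by rw [e1]; exact hσα'
    rw [Fmod_app hx0 hσα, Fmod_app hy0 hyα, hua]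
    field_simp
    linear_combination -hσ + σ*u*c2
  -- memberships of the four special points
  have m0 : Fmod α 0 + Fmod α (0 + a) = (α+a)⁻¹ := by
    rw [zero_add, Fmod_zero, Fmod_app ha0 haα]; exact veq
  have ma : Fmod α a + Fmod α (a + a) = (α+a)⁻¹ := by
    rw [CharTwo.add_self_eq_zero, Fmod_zero, Fmod_app ha0 haα, add_comm]; exact veq
  have hαa_ne_α : α + a ≠ α := hαa_α
  have mα : Fmod α α + Fmod α (α + a) = (α+a)⁻¹ := by
    rw [Fmod_self, Fmod_app hαa0 hαa_ne_α, zero_add]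
  have mαa : Fmod α (α + a) + Fmod α (α + a + a) = (α+a)⁻¹ := by
    have e : α + a + a = α := by linear_combination a*c2
    rw [e, Fmod_self, add_zero, Fmod_app hαa0 hαa_ne_α]
  have hρ' : (ρ+1)^2 + (ρ+1) = u := by linear_combination hρ + (ρ+1)*c2
  obtain ⟨hρ0, hρα, hραa⟩ := rootne ρ hρ
  obtain ⟨hρ10, hρ1α, hρ1αa⟩ := rootne (ρ+1) hρ'
  have e1 : a*ρ + a = a*(ρ+1) := by ring
  have mρ : Fmod α (a*ρ) + Fmod α (a*ρ + a) = (α+a)⁻¹ := rootD ρ hρ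
  have mρa : Fmod α (a*ρ + a) + Fmod α (a*ρ + a + a) = (α+a)⁻¹ := by
    have e2 : a*ρ + a + a = a*ρ := by linear_combination a*c2
    rw [e2, add_comm]; exact mρ
  -- set equality
  have hset : (Finset.univ.filter fun x : F => Fmod α x + Fmod α (x + a) = (α + a)⁻¹) =
      ({0, a, α, α + a, a*ρ, a*ρ+a} : Finset F) := by
    ext x
    simp only [mem_filter, mem_univ, true_and, mem_insert, mem_singleton]
    constructor
    · intro hx
      by_cases h0 : x = 0
      · exact Or.inl h0
      by_cases hxa : x = a
      · exact Or.inr (Or.inl hxa)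
      by_cases hxα : x = α
      · exact Or.inr (Or.inr (Or.inl hxα))
      by_cases hxαa : x = α + a
      · exact Or.inr (Or.inr (Or.inr (Or.inl hxαa)))
      obtain ⟨hb, hquad⟩ := nonspecial ha0 h0 hxa hxα hxαa hx
      rw [inv_inv, hua] at hquad
      have r1 : (a*ρ)^2 + a*(a*ρ) + a*(a*u) = 0 := by
        linear_combination a^2*hρ + a^2*u*c2
      have r2 : (a*ρ+a)^2 + a*(a*ρ+a) + a*(a*u) = 0 := by
        linear_combination a^2*hρ' + a^2*u*c2
      have hne : a*ρ ≠ a*ρ + a := fun h => ha0 (by linear_combination -h)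
      rcases quad_third r1 r2 hquad hne with h | h
      · exact Or.inr (Or.inr (Or.inr (Or.inr (Or.inl h))))
      · exact Or.inr (Or.inr (Or.inr (Or.inr (Or.inr h))))
    · rintro (rfl|rfl|rfl|rfl|rfl|rfl)
      exacts [m0, ma, mα, mαa, mρ, mρa]
  -- distinctness and cardinality
  have n1 : a*ρ ≠ 0 := mul_ne_zero ha0 hρ0
  have n2 : a*ρ ≠ a := by
    intro h
    have h' : a * ρ = a * 1 := by rw [mul_one]; exact h
    have hρeq1 : ρ = 1 := mul_left_cancel₀ ha0 h'
    apply hρ10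
    rw [hρeq1]
    linear_combination c2
  have n3 : a*ρ+a ≠ 0 := by rw [e1]; exact mul_ne_zero ha0 hρ10
  have n4 : a*ρ+a ≠ a := by
    intro h; exact n1 (by linear_combination h)
  have n5 : a*ρ+a ≠ α := by rw [e1]; exact hρ1α
  have n6 : a*ρ+a ≠ α+a := by rw [e1]; exact hρ1αa
  have n7 : a*ρ ≠ a*ρ+a := fun h => ha0 (by linear_combination -h)
  have hcard6 : ({0, a, α, α + a, a*ρ, a*ρ+a} : Finset F).card = 6 := by
    rw [card_insert_of_notMem (by
      simp only [mem_insert, mem_singleton]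
      push_neg
      exact ⟨ha0.symm, hα.symm, hαa0.symm, n1.symm, n3.symm⟩)]
    rw [card_insert_of_notMem (by
      simp only [mem_insert, mem_singleton]
      push_neg
      exact ⟨haα, (hαa_a).symm, n2.symm, n4.symm⟩)]
    rw [card_insert_of_notMem (by
      simp only [mem_insert, mem_singleton]
      push_neg
      exact ⟨hαa_α.symm, hρα.symm, n5.symm⟩)]
    rw [card_insert_of_notMem (by
      simp only [mem_insert, mem_singleton]
      push_neg
      exact ⟨hραa.symm, n6.symm⟩)]
    rw [card_insert_of_notMem (by
      simp only [mem_singleton]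
      exact n7)]
    rw [card_singleton]
  refine ⟨hset, ?_⟩
  unfold delta
  rw [hset, hcard6]

lemma quad_card_le_two [Fintype F] {p q : F} {s : Finset F}
    (h : ∀ x ∈ s, x^2 + p*x + q = 0) : s.card ≤ 2 := by
  by_contra hc
  push_neg at hc
  obtain ⟨x, hx, y, hy, z, hz, hxy, hxz, hyz⟩ := Finset.two_lt_card.1 hc
  rcases quad_third (h x hx) (h y hy) (h z hz) hxy with h' | h'
  · exact hxz h'.symm
  · exact hyz h'.symm

lemma Dzero {α a : F} (ha : a ≠ 0) (haα : a ≠ α) :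
    Fmod α 0 + Fmod α (0 + a) = α⁻¹ + a⁻¹ := by
  rw [zero_add, Fmod_zero, Fmod_app ha haα]

lemma Da {α a : F} (ha : a ≠ 0) (haα : a ≠ α) :
    Fmod α a + Fmod α (a + a) = α⁻¹ + a⁻¹ := by
  rw [CharTwo.add_self_eq_zero, Fmod_zero, Fmod_app ha haα, add_comm]

lemma Dalpha {α a : F} (ha : a ≠ 0) (haα : a ≠ α) :
    Fmod α α + Fmod α (α + a) = (α + a)⁻¹ := by
  have h0 : α + a ≠ 0 := fun h => haα (add_eq_zero_iff'.1 h).symm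
  have h1 : α + a ≠ α := fun h => ha (by linear_combination h)
  rw [Fmod_self, Fmod_app h0 h1, zero_add]

lemma Dalphaa {α a : F} (ha : a ≠ 0) (haα : a ≠ α) :
    Fmod α (α + a) + Fmod α (α + a + a) = (α + a)⁻¹ := by
  have c2 : (2:F) = 0 := CharTwo.two_eq_zero
  have h0 : α + a ≠ 0 := fun h => haα (add_eq_zero_iff'.1 h).symm
  have h1 : α + a ≠ α := fun h => ha (by linear_combination h)
  have e : α + a + a = α := by linear_combination a*c2
  rw [e, Fmod_self, add_zero, Fmod_app h0 h1]

lemma dichotomy [Fintype F] {α : F} (hα : α ≠ 0) {a : F} (ha : a ≠ 0) (b : F) :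
    delta (Fmod α) a b ≤ 4 ∨
    ∃ u ρ : F, u ^ 2 = u + 1 ∧ a = α * u ∧ ρ ^ 2 + ρ = u ∧ b = (α + a)⁻¹ ∧
      (Finset.univ.filter fun x : F => Fmod α x + Fmod α (x + a) = b) =
        ({0, a, α, α + a, a*ρ, a*ρ+a} : Finset F) ∧
      delta (Fmod α) a b = 6 := by
  classical
  have c2 : (2:F) = 0 := CharTwo.two_eq_zero
  set Sb := (Finset.univ.filter fun x : F => Fmod α x + Fmod α (x + a) = b) with hSb
  set T := ({0, a, α, α + a} : Finset F) with hT
  have hsplit : (Sb.filter (fun x => x ∈ T)).card + (Sb.filter (fun x => x ∉ T)).card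
      = Sb.card := card_filter_add_card_filter_not _
  have hdelta : delta (Fmod α) a b = Sb.card := rfl
  have houter : (Sb.filter (fun x => x ∉ T)).card ≤ 2 := by
    apply quad_card_le_two (p := a) (q := a * b⁻¹)
    intro x hx
    simp only [hSb, hT, mem_filter, mem_univ, true_and, mem_insert, mem_singleton] at hx
    push_neg at hx
    obtain ⟨hDx, hx0, hxa, hxα, hxαa⟩ := hx
    exact (nonspecial ha hx0 hxa hxα hxαa hDx).2
  by_cases haα : a = α
  · left
    have hTsub : Sb.filter (fun x => x ∈ T) ⊆ ({0, α} : Finset F) := by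
      intro x hx
      simp only [hT, mem_filter, mem_insert, mem_singleton] at hx
      simp only [mem_insert, mem_singleton]
      rcases hx.2 with h|h|h|h
      · exact Or.inl h
      · exact Or.inr (h.trans haα)
      · exact Or.inr h
      · rw [haα, CharTwo.add_self_eq_zero] at h; exact Or.inl h
    have h2 : (Sb.filter (fun x => x ∈ T)).card ≤ 2 := by
      refine le_trans (card_le_card hTsub) ?_
      refine le_trans (card_insert_le _ _) ?_
      simp
    omega
  · by_cases hb1 : b = α⁻¹ + a⁻¹
    · by_cases hb2 : b = (α + a)⁻¹
      · -- potential 6 case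
        rcases (Sb.filter (fun x => x ∉ T)).eq_empty_or_nonempty with hemp | ⟨x0, hx0⟩
        · left
          have h4 : (Sb.filter (fun x => x ∈ T)).card ≤ 4 := by
            refine le_trans (card_le_card (fun x hx => (mem_filter.1 hx).2)) ?_
            refine le_trans (card_insert_le _ _) ?_
            refine le_trans (Nat.add_le_add_right (card_insert_le _ _) 1) ?_
            refine le_trans (Nat.add_le_add_right (Nat.add_le_add_right (card_insert_le _ _) 1) 1) ?_
            simp
          rw [hemp, card_empty] at hsplit
          omega
        · right
          have hαa0 : α + a ≠ 0 := fun h => haα ((add_eq_zero_iff'.1 h).symm)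
          have hkey : α⁻¹ + a⁻¹ = (α + a)⁻¹ := by rw [← hb1, hb2]
          have hkey2 : (α + a) * (α + a) = α * a := by
            field_simp at hkey
            linear_combination hkey
          set u : F := α⁻¹ * a with hu_def
          have ha_eq : a = α * u := by
            rw [hu_def]; field_simp
          have hu : u ^ 2 = u + 1 := by
            rw [hu_def]
            field_simp
            linear_combination hkey2 - (α^2 + α*a)*c2
          simp only [hSb, hT, mem_filter, mem_univ, true_and, mem_insert, mem_singleton] at hx0
          push_neg at hx0
          obtain ⟨hDx, hx00, hx0a, hx0α, hx0αa⟩ := hx0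
          obtain ⟨hbne, hquad⟩ := nonspecial ha hx00 hx0a hx0α hx0αa hDx
          rw [hb2, inv_inv] at hquad
          set ρ : F := x0 * a⁻¹ with hρ_def
          have hρ : ρ ^ 2 + ρ = u := by
            rw [hρ_def, hu_def]
            field_simp
            linear_combination α*hquad - a*hkey2
          obtain ⟨hset, hd6⟩ := six_set hα hu ha_eq hρ
          refine ⟨u, ρ, hu, ha_eq, hρ, hb2, ?_, ?_⟩
          · rw [hSb, hb2]; exact hset
          · rw [hb2]; exact hd6
      · -- b ≠ (α+a)⁻¹ : special points α, α+a excluded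
        left
        have hTsub : Sb.filter (fun x => x ∈ T) ⊆ ({0, a} : Finset F) := by
          intro x hx
          simp only [hSb, hT, mem_filter, mem_univ, true_and, mem_insert, mem_singleton] at hx
          simp only [mem_insert, mem_singleton]
          rcases hx.2 with h|h|h|h
          · exact Or.inl h
          · exact Or.inr h
          · exfalso; apply hb2; rw [← hx.1, h]; exact (Dalpha ha haα).symm ▸ (Dalpha ha haα)
          · exfalso; apply hb2; rw [← hx.1, h]; exact Dalphaa ha haα
        have h2 : (Sb.filter (fun x => x ∈ T)).card ≤ 2 := by
          refine le_trans (card_le_card hTsub) ?_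
          refine le_trans (card_insert_le _ _) ?_
          simp
        omega
    · -- b ≠ α⁻¹ + a⁻¹ : special points 0, a excluded
      left
      have hTsub : Sb.filter (fun x => x ∈ T) ⊆ ({α, α + a} : Finset F) := by
        intro x hx
        simp only [hSb, hT, mem_filter, mem_univ, true_and, mem_insert, mem_singleton] at hx
        simp only [mem_insert, mem_singleton]
        rcases hx.2 with h|h|h|h
        · exfalso; apply hb1; rw [← hx.1, h]; exact Dzero ha haα
        · exfalso; apply hb1; rw [← hx.1, h]; exact Da ha haα
        · exact Or.inl h
        · exact Or.inr h
      have h2 : (Sb.filter (fun x => x ∈ T)).card ≤ 2 := by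
        refine le_trans (card_le_card hTsub) ?_
        refine le_trans (card_insert_le _ _) ?_
        simp
      omega

lemma no_rho [Fintype F] {n : ℕ} (hcard : Fintype.card F = 2 ^ n) (h2 : n % 4 = 2)
    {u ρ : F} (hu : u ^ 2 = u + 1) (hρ : ρ ^ 2 + ρ = u) : False := by
  have h1 : (1:F) ≠ 0 := one_ne_zero
  have c2 : (2:F) = 0 := CharTwo.two_eq_zero
  have hρ4 : ρ ^ 4 = ρ + 1 := by linear_combination (ρ^2+ρ+u+1)*hρ + hu + (u - ρ - ρ^2 - ρ^3)*c2
  have hρ0 : ρ ≠ 0 := by rintro rfl; simp at hρ4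
  have hρ16 : ρ ^ 16 = ρ := by
    have sq : ∀ x y : F, (x + y) ^ 2 = x ^ 2 + y ^ 2 := CharTwo.add_sq
    calc ρ ^ 16 = ((ρ^4)^2)^2 := by ring
    _ = ((ρ+1)^2)^2 := by rw [hρ4]
    _ = (ρ^2 + 1)^2 := by rw [sq ρ 1]; ring_nf
    _ = ρ^4 + 1 := by rw [sq (ρ^2) 1]; ring_nf
    _ = ρ := by rw [hρ4, add_assoc, one_add_one_eq_two, c2, add_zero]
  have hρ15 : ρ ^ 15 = 1 := by
    have h' := hρ16
    rw [show (16:ℕ) = 15 + 1 by norm_num, pow_succ] at h'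
    field_simp at h'
    exact h'
  have hdvd15 : orderOf ρ ∣ 15 := orderOf_dvd_of_pow_eq_one hρ15
  have hdvdq : orderOf ρ ∣ 2 ^ n - 1 := by
    rw [← hcard]
    exact orderOf_dvd_of_pow_eq_one (FiniteField.pow_card_sub_one_eq_one ρ hρ0)
  have hpos : 0 < orderOf ρ := by
    exact (isOfFinOrder_iff_pow_eq_one.2 ⟨15, by norm_num, hρ15⟩).orderOf_pos
  have hle : orderOf ρ ≤ 15 := Nat.le_of_dvd (by norm_num) hdvd15
  have h5 : (5 : ℕ) ∣ orderOf ρ := by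
    have hne1 : orderOf ρ ≠ 1 := by
      intro h
      have : ρ = 1 := orderOf_eq_one_iff.1 h
      rw [this, one_pow, one_add_one_eq_two, c2] at hρ4
      exact h1 hρ4
    have hne3 : orderOf ρ ≠ 3 := by
      intro h
      have h3 : ρ ^ 3 = 1 := by rw [← h]; exact pow_orderOf_eq_one ρ
      have : ρ ^ 4 = ρ := by
        rw [show (4:ℕ) = 3 + 1 by norm_num, pow_succ, h3, one_mul]
      rw [hρ4] at this
      exact h1 (by linear_combination this)
    interval_cases h : orderOf ρ <;> revert hdvd15 hne1 hne3 <;> decide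
  have h5q : (5 : ℕ) ∣ 2 ^ n - 1 := h5.trans hdvdq
  have hmod : 2 ^ n % 5 = 4 := by
    have hn4 : n = 4 * (n / 4) + 2 := by omega
    rw [hn4, pow_add, pow_mul, Nat.mul_mod, Nat.pow_mod]
    norm_num
  have hge : 1 ≤ 2 ^ n := Nat.one_le_two_pow
  omega


end Aux

/-- for even `n ≥ 4`, occurrence of `∇_{F_{0,α}}(a,x) = 6`. -/
theorem stmt_10 (n : ℕ) (hn : 4 ≤ n) (heven : Even n)
    [CharP F 2] (hcard : Fintype.card F = 2 ^ n)
    (α : F) (hα : α ≠ 0) (ω : F) (hω : ω ^ 2 = ω + 1) :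
    (n % 4 = 2 → ∀ a : F, a ≠ 0 → ∀ x : F, nabla (Fmod α) a x ≤ 4) ∧
    (n % 4 = 0 → ∀ a : F, a ≠ 0 → ∀ x : F,
      (nabla (Fmod α) a x = 6 ↔
        ((a = α * ω ∧ ∃ ρ : F, ρ ^ 2 + ρ = ω ∧
            (x = 0 ∨ x = α ∨ x = α * ω ∨ x = α * ω ^ 2 ∨ x = a * ρ ∨ x = a * ρ + a)) ∨
         (a = α * ω ^ 2 ∧ ∃ ρ : F, ρ ^ 2 + ρ = ω ^ 2 ∧
            (x = 0 ∨ x = α ∨ x = α * ω ∨ x = α * ω ^ 2 ∨ x = a * ρ ∨ x = a * ρ + a))))) := by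
  have c2 : (2:F) = 0 := CharTwo.two_eq_zero
  have hω2 : (ω^2)^2 = ω^2 + 1 := by
    linear_combination (ω^2+ω+1)*hω + ω*c2
  constructor
  · intro h2 a ha x
    rcases dichotomy hα ha (Fmod α x + Fmod α (x + a)) with h | ⟨u, ρ, hu, _, hρ, _, _, _⟩
    · exact h
    · exact absurd (no_rho hcard h2 hu hρ) (fun h => h)
  · intro _ a ha x
    constructor
    · intro h6
      rcases dichotomy hα ha (Fmod α x + Fmod α (x + a)) with h | ⟨u, ρ, hu, ha_eq, hρ, hb, hset, hd6⟩
      · exact absurd h6 (by unfold nabla at *; omega)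
      · have hxmem : x ∈ ({0, a, α, α + a, a*ρ, a*ρ+a} : Finset F) := by
          rw [← hset]
          exact mem_filter.2 ⟨mem_univ x, rfl⟩
        simp only [mem_insert, mem_singleton] at hxmem
        have hsq : (u + ω)^2 = u + ω := by
          linear_combination hu + hω + (u*ω + 1)*c2
        have hfac : (u + ω) * ((u + ω) - 1) = 0 := by linear_combination hsq
        rcases mul_eq_zero.1 hfac with h | h
        · -- u = ω
          have huω : u = ω := add_eq_zero_iff'.1 h
          have hαa2 : α + a = α * ω^2 := by
            rw [ha_eq, huω]; linear_combination (-α)*hω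
          left
          refine ⟨by rw [ha_eq, huω], ρ, by rw [← huω]; exact hρ, ?_⟩
          rcases hxmem with rfl|rfl|rfl|rfl|rfl|rfl
          · exact Or.inl rfl
          · exact Or.inr (Or.inr (Or.inl (by rw [ha_eq, huω])))
          · exact Or.inr (Or.inl rfl)
          · exact Or.inr (Or.inr (Or.inr (Or.inl hαa2)))
          · exact Or.inr (Or.inr (Or.inr (Or.inr (Or.inl rfl))))
          · exact Or.inr (Or.inr (Or.inr (Or.inr (Or.inr rfl))))
        · -- u = ω + 1 = ω²
          have huω : u = ω^2 := by
            have h' : u = ω + 1 := by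
              rw [sub_eq_zero] at h
              linear_combination h - ω*c2
            rw [h', ← hω]
          have hαa2 : α + a = α * ω := by
            rw [ha_eq, huω]; linear_combination α*hω + α*c2
          right
          refine ⟨by rw [ha_eq, huω], ρ, by rw [← huω]; exact hρ, ?_⟩
          rcases hxmem with rfl|rfl|rfl|rfl|rfl|rfl
          · exact Or.inl rfl
          · exact Or.inr (Or.inr (Or.inr (Or.inl (by rw [ha_eq, huω]))))
          · exact Or.inr (Or.inl rfl)
          · exact Or.inr (Or.inr (Or.inl hαa2))
          · exact Or.inr (Or.inr (Or.inr (Or.inr (Or.inl rfl))))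
          · exact Or.inr (Or.inr (Or.inr (Or.inr (Or.inr rfl))))
    · rintro (⟨haω, ρ, hρ, hx⟩ | ⟨haω, ρ, hρ, hx⟩)
      · obtain ⟨hset, hd6⟩ := six_set hα hω haω hρ
        have hαa2 : α + a = α * ω^2 := by
          rw [haω]; linear_combination (-α)*hω
        have hxmem : x ∈ ({0, a, α, α + a, a*ρ, a*ρ+a} : Finset F) := by
          simp only [mem_insert, mem_singleton]
          rcases hx with rfl|rfl|rfl|rfl|rfl|rfl
          · exact Or.inl rfl
          · exact Or.inr (Or.inr (Or.inl rfl))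
          · exact Or.inr (Or.inl haω.symm)
          · exact Or.inr (Or.inr (Or.inr (Or.inl hαa2.symm)))
          · exact Or.inr (Or.inr (Or.inr (Or.inr (Or.inl rfl))))
          · exact Or.inr (Or.inr (Or.inr (Or.inr (Or.inr rfl))))
        rw [← hset] at hxmem
        have hDx := (mem_filter.1 hxmem).2
        unfold nabla
        rw [hDx]
        exact hd6
      · obtain ⟨hset, hd6⟩ := six_set hα hω2 haω hρ
        have hαa2 : α + a = α * ω := by
          rw [haω]; linear_combination α*hω + α*c2
        have hxmem : x ∈ ({0, a, α, α + a, a*ρ, a*ρ+a} : Finset F) := by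
          simp only [mem_insert, mem_singleton]
          rcases hx with rfl|rfl|rfl|rfl|rfl|rfl
          · exact Or.inl rfl
          · exact Or.inr (Or.inr (Or.inl rfl))
          · exact Or.inr (Or.inr (Or.inr (Or.inl hαa2.symm)))
          · exact Or.inr (Or.inl haω.symm)
          · exact Or.inr (Or.inr (Or.inr (Or.inr (Or.inl rfl))))
          · exact Or.inr (Or.inr (Or.inr (Or.inr (Or.inr rfl))))
        rw [← hset] at hxmem
        have hDx := (mem_filter.1 hxmem).2
        unfold nabla
        rw [hDx]
        exact hd6



end APNPaper
end

section
/- Let n ≥ 4 be even, q = 2^n, α ∈ 𝔽_q^*, and let ω be a fixed element of 𝔽_4 \ 𝔽_2 regarded as an element of 𝔽_q. Let k = |R-Spec_q(F_{0,α})| and s = |{a ∈ 𝔽_q \ {0, α, αω, αω²} : Tr(α/(a+α)) = Tr(α/a) = 0}|. Then APN-def(F_{0,α}) = 9q + 8s − 9k − 9 when n ≡ 2 (mod 4), and APN-def(F_{0,α}) = 9q + 8s − 9k + 5 when n ≡ 0 (mod 4). -/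
namespace APNPaper

open Finset

variable {F : Type*} [Field F] [Fintype F] [DecidableEq F]

section Lemmas

section TrLemmas

variable [CharP F 2] {n : ℕ}

lemma tr_add (x y : F) : Tr n (x + y) = Tr n x + Tr n y := by
  unfold Tr
  rw [← Finset.sum_add_distrib]
  exact Finset.sum_congr rfl fun i _ => add_pow_char_pow ..

lemma pow_card_self (hcard : Fintype.card F = 2 ^ n) (x : F) : x ^ 2 ^ n = x := by
  rw [← hcard]; exact FiniteField.pow_card x

lemma tr_sq (hcard : Fintype.card F = 2 ^ n) (x : F) : Tr n (x ^ 2) = Tr n x := by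
  have h1 : ∀ i : ℕ, (x ^ 2) ^ 2 ^ i = x ^ 2 ^ (i + 1) := by
    intro i
    rw [← pow_mul]
    congr 1
    rw [pow_succ, Nat.mul_comm]
  have h2 : (∑ i ∈ Finset.range (n + 1), x ^ 2 ^ i)
      = (∑ i ∈ Finset.range n, x ^ 2 ^ (i + 1)) + x ^ 2 ^ 0 := Finset.sum_range_succ' _ n
  have h3 : (∑ i ∈ Finset.range (n + 1), x ^ 2 ^ i)
      = (∑ i ∈ Finset.range n, x ^ 2 ^ i) + x ^ 2 ^ n := Finset.sum_range_succ _ n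
  unfold Tr
  rw [Finset.sum_congr rfl fun i _ => h1 i]
  have := h2.symm.trans h3
  rw [pow_card_self hcard x] at this
  simp only [pow_zero, pow_one] at this
  -- this : (∑ i ∈ range n, x ^ 2 ^ (i+1)) + x = (∑ i ∈ range n, x ^ 2 ^ i) + x
  exact add_right_cancel this

lemma tr_sq_add_self (hcard : Fintype.card F = 2 ^ n) (x : F) : Tr n (x ^ 2 + x) = 0 := by
  rw [tr_add, tr_sq hcard, CharTwo.add_self_eq_zero]

lemma tr_eq_zero_or_one (hcard : Fintype.card F = 2 ^ n) (z : F) :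
    Tr n z = 0 ∨ Tr n z = 1 := by
  have h : Tr n z ^ 2 = Tr n z := by
    have h1 : Tr n z ^ 2 = Tr n (z ^ 2) := by
      unfold Tr
      rw [sum_pow_char]
      refine Finset.sum_congr rfl fun i _ => ?_
      rw [← pow_mul, ← pow_mul, Nat.mul_comm]
    rw [h1, tr_sq hcard]
  have : Tr n z * (Tr n z + 1) = 0 := by
    rw [mul_add, mul_one, ← sq, h, CharTwo.add_self_eq_zero]
  rcases mul_eq_zero.mp this with h0 | h1
  · exact Or.inl h0
  · right
    rw [add_eq_zero_iff_eq_neg] at h1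
    rw [h1]
    exact CharTwo.neg_eq 1

lemma tr_one (h2 : (2:ℕ) ∣ n) : Tr n (1 : F) = 0 := by
  unfold Tr
  simp only [one_pow, Finset.sum_const, Finset.card_range, nsmul_eq_mul, mul_one]
  exact (CharP.cast_eq_zero_iff F 2 n).mpr h2

lemma exists_tr_ne_zero (hn : 0 < n) (hcard : Fintype.card F = 2 ^ n) :
    ∃ z : F, Tr n z ≠ 0 := by
  by_contra hc
  push_neg at hc
  set p : Polynomial F := ∑ i ∈ Finset.range n, Polynomial.X ^ (2 ^ i) with hp
  have hev : ∀ z : F, p.eval z = 0 := by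
    intro z
    rw [hp]
    simp only [Polynomial.eval_finset_sum, Polynomial.eval_pow, Polynomial.eval_X]
    exact hc z
  have hdeg : p.natDegree ≤ 2 ^ (n - 1) := by
    apply Polynomial.natDegree_sum_le_of_forall_le
    intro i hi
    rw [Polynomial.natDegree_X_pow]
    exact Nat.pow_le_pow_right (by norm_num) (Nat.le_sub_one_of_lt (Finset.mem_range.mp hi))
  have hzero : p = 0 := by
    apply Polynomial.eq_zero_of_forall_eval_zero_of_natDegree_lt_card p hev
    have : p.natDegree < Fintype.card F := by
      rw [hcard]
      exact lt_of_le_of_lt hdeg (Nat.pow_lt_pow_right (by norm_num) (Nat.sub_lt hn one_pos))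
    rw [Cardinal.mk_fintype]; exact_mod_cast this
  have hcoeff : p.coeff (2 ^ (n - 1)) = 1 := by
    rw [hp, Polynomial.finset_sum_coeff]
    rw [Finset.sum_eq_single (n - 1)]
    · simp [Polynomial.coeff_X_pow]
    · intro i hi hne
      simp only [Polynomial.coeff_X_pow]
      rw [if_neg]
      exact fun h => hne ((Nat.pow_right_injective (le_refl 2) h).symm)
    · intro h
      exact absurd (Finset.mem_range.mpr (Nat.sub_lt hn one_pos)) h
  rw [hzero] at hcoeff
  simp at hcoeff

end TrLemmas

section AS

variable [CharP F 2] {n : ℕ}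

lemma sq_eq_self_iff (t : F) : t ^ 2 = t ↔ t = 0 ∨ t = 1 := by
  constructor
  · intro h
    have : t * (t + 1) = 0 := by rw [mul_add, mul_one, ← sq, h, CharTwo.add_self_eq_zero]
    rcases mul_eq_zero.mp this with h0 | h1
    · exact Or.inl h0
    · right; rw [add_eq_zero_iff_eq_neg] at h1; rw [h1]; exact CharTwo.neg_eq 1
  · rintro (rfl | rfl) <;> ring

lemma two_zero [CharP F 2] : (2 : F) = 0 := CharTwo.two_eq_zero

lemma as_fiber (x y : F) (h : x ^ 2 + x = y ^ 2 + y) : y = x ∨ y = x + 1 := by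
  have h2 : (2 : F) = 0 := two_zero
  have ht : (x + y) ^ 2 = x + y := by linear_combination h + (x*y + y^2 - x) * h2
  rcases (sq_eq_self_iff _).mp ht with h0 | h1
  · left; linear_combination h0 - x * h2
  · right; linear_combination h1 - x * h2

lemma as_card (hn : 0 < n) (hcard : Fintype.card F = 2 ^ n) (d : F) :
    (Finset.univ.filter fun x : F => x ^ 2 + x = d).card
      = if Tr n d = 0 then 2 else 0 := by
  by_cases hd : Tr n d = 0
  · rw [if_pos hd]
    -- existence of a solution via counting
    obtain ⟨z₀, hz₀⟩ := exists_tr_ne_zero hn hcard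
    have hz₁ : Tr n z₀ = 1 := (tr_eq_zero_or_one hcard z₀).resolve_left hz₀
    set φ : F → F := fun x => x ^ 2 + x with hφ
    set im : Finset F := Finset.univ.image φ with him
    set ker : Finset F := Finset.univ.filter (fun z => Tr n z = 0) with hker
    have h_im_ker : im ⊆ ker := by
      intro b hb
      obtain ⟨x, _, rfl⟩ := Finset.mem_image.mp hb
      exact Finset.mem_filter.mpr ⟨Finset.mem_univ _, tr_sq_add_self hcard x⟩
    have hfib : ∀ b ∈ im, (Finset.univ.filter fun x => φ x = b).card = 2 := by
      intro b hb
      obtain ⟨x₀, _, rfl⟩ := Finset.mem_image.mp hb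
      have : (Finset.univ.filter fun x => φ x = φ x₀) = {x₀, x₀ + 1} := by
        ext x
        simp only [Finset.mem_filter, Finset.mem_univ, true_and, Finset.mem_insert,
          Finset.mem_singleton]
        have h2 : (2 : F) = 0 := two_zero
        constructor
        · intro h; exact as_fiber x₀ x (show x₀ ^ 2 + x₀ = x ^ 2 + x from h.symm)
        · rintro (rfl | rfl)
          · rfl
          · show (x₀ + 1) ^ 2 + (x₀ + 1) = x₀ ^ 2 + x₀
            linear_combination (x₀ + 1) * h2
      rw [this, Finset.card_insert_of_notMem, Finset.card_singleton]
      simp only [Finset.mem_singleton]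
      intro h
      exact one_ne_zero (show (1:F) = 0 by linear_combination -h)
    have hcount_im : 2 * im.card = Fintype.card F := by
      have := Finset.card_eq_sum_card_image φ Finset.univ
      rw [Finset.card_univ] at this
      rw [this, ← him]
      rw [Finset.sum_congr rfl (fun b hb => hfib b hb), Finset.sum_const, smul_eq_mul,
        Nat.mul_comm]
    have hcount_ker : 2 * ker.card = Fintype.card F := by
      have hbij : ker.card = (Finset.univ.filter (fun z : F => Tr n z ≠ 0)).card := by
        apply Finset.card_nbij' (fun z => z + z₀) (fun z => z + z₀)
        · intro z hz
          simp only [hker, Finset.mem_coe, Finset.mem_filter, Finset.mem_univ, true_and] at hz ⊢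
          rw [tr_add, hz, hz₁, zero_add]
          exact one_ne_zero
        · intro z hz
          simp only [Finset.mem_coe, Finset.mem_filter, Finset.mem_univ, true_and, hker] at hz ⊢
          have := (tr_eq_zero_or_one hcard z).resolve_left hz
          rw [tr_add, this, hz₁, CharTwo.add_self_eq_zero]
        · intro z _; simp only; rw [add_assoc, CharTwo.add_self_eq_zero, add_zero]
        · intro z _; simp only; rw [add_assoc, CharTwo.add_self_eq_zero, add_zero]
      have hsplit : ker.card + (Finset.univ.filter (fun z : F => Tr n z ≠ 0)).card
          = Fintype.card F := by
        rw [hker]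
        have := Finset.card_filter_add_card_filter_not
          (s := (Finset.univ : Finset F)) (p := fun z : F => Tr n z = 0)
        rw [Finset.card_univ] at this
        exact this
      omega
    have him_eq : im = ker := Finset.eq_of_subset_of_card_le h_im_ker (by omega)
    have hd_im : d ∈ im := by
      rw [him_eq, hker]
      exact Finset.mem_filter.mpr ⟨Finset.mem_univ _, hd⟩
    exact hfib d hd_im
  · rw [if_neg hd]
    rw [Finset.card_eq_zero, Finset.filter_eq_empty_iff]
    intro x _ hx
    exact hd (hx ▸ tr_sq_add_self hcard x)

lemma quad_card (hn : 0 < n) (hcard : Fintype.card F = 2 ^ n) {a : F} (ha : a ≠ 0) (c : F) :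
    (Finset.univ.filter fun x : F => x ^ 2 + a * x + c = 0).card
      = if Tr n (c / a ^ 2) = 0 then 2 else 0 := by
  have h2 : (2 : F) = 0 := two_zero
  have ha2 : a ^ 2 ≠ 0 := pow_ne_zero 2 ha
  have hcd : c = a ^ 2 * (c / a ^ 2) := by field_simp
  set d := c / a ^ 2 with hd
  rw [← as_card hn hcard]
  apply Finset.card_nbij' (fun x => x / a) (fun y => a * y)
  · intro x hx
    simp only [Finset.mem_coe, Finset.mem_filter, Finset.mem_univ, true_and] at hx ⊢
    rw [hcd] at hx
    have e1 : (x / a) * a = x := div_mul_cancel₀ x ha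
    apply mul_left_cancel₀ ha2
    calc a ^ 2 * ((x / a) ^ 2 + x / a) = ((x / a) * a) ^ 2 + ((x / a) * a) * a := by ring
      _ = x ^ 2 + x * a := by rw [e1]
      _ = a ^ 2 * d := by linear_combination hx - a ^ 2 * d * h2
  · intro y hy
    simp only [Finset.mem_coe, Finset.mem_filter, Finset.mem_univ, true_and] at hy ⊢
    rw [hcd]
    linear_combination a ^ 2 * hy + a ^ 2 * d * h2
  · intro x _; field_simp
  · intro y _; field_simp
end AS




lemma char2_eq_iff [CharP F 2] (x y : F) : x = y ↔ x + y = 0 := by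
  have h2 : (2 : F) = 0 := two_zero
  constructor
  · intro h; rw [h]; exact CharTwo.add_self_eq_zero y
  · intro h; linear_combination h - y * h2

lemma filter_split (T : Finset F) (Q : F → Prop) [DecidablePred Q] :
    (Finset.univ.filter Q).card = (T.filter Q).card + ((Finset.univ \ T).filter Q).card := by
  rw [← Finset.card_union_of_disjoint (Finset.disjoint_filter_filter Finset.disjoint_sdiff),
    ← Finset.filter_union, Finset.union_sdiff_of_subset (Finset.subset_univ T)]

section DeltaFormula

variable [CharP F 2] {n : ℕ} {α : F}

lemma fmod_ne {x : F} (h0 : x ≠ 0) (hxa : x ≠ α) : Fmod α x = x⁻¹ := by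
  simp [Fmod, h0, hxa]

lemma fmod_zero : Fmod α 0 = α⁻¹ := by simp [Fmod]

lemma fmod_alpha (hα : α ≠ 0) : Fmod α α = 0 := by simp [Fmod, hα]

/-- The master formula for `δ_{F_{0,α}}(a, b)` when `a ∉ {0, α}`. -/
lemma delta_formula (hn : 0 < n) (hcard : Fintype.card F = 2 ^ n) (hα : α ≠ 0)
    {a : F} (ha0 : a ≠ 0) (haα : a ≠ α) (b : F) :
    delta (Fmod α) a b =
      (if α⁻¹ + a⁻¹ = b then 2 else 0) + (if (α + a)⁻¹ = b then 2 else 0) +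
      (if b = 0 then 0 else if α ^ 2 + a * α + a / b = 0 then 0
        else if Tr n (1 / (a * b)) = 0 then 2 else 0) := by
  have h2 : (2 : F) = 0 := two_zero
  have hαa0 : α + a ≠ 0 := by
    intro h; exact haα (show a = α by linear_combination h - α * h2)
  have hαaα : α + a ≠ α := by intro h; exact ha0 (by linear_combination h)
  have hαaa : α + a ≠ a := by intro h; exact hα (by linear_combination h)
  set T : Finset F := {0, a, α, α + a} with hT
  -- values on T
  have hv0 : Fmod α 0 + Fmod α (0 + a) = α⁻¹ + a⁻¹ := by
    rw [zero_add, fmod_zero, fmod_ne ha0 haα]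
  have haa : a + a = 0 := CharTwo.add_self_eq_zero a
  have hva : Fmod α a + Fmod α (a + a) = α⁻¹ + a⁻¹ := by
    rw [haa, fmod_zero, fmod_ne ha0 haα, add_comm]
  have hvα : Fmod α α + Fmod α (α + a) = (α + a)⁻¹ := by
    rw [fmod_alpha hα, fmod_ne hαa0 hαaα, zero_add]
  have hvαa : Fmod α (α + a) + Fmod α (α + a + a) = (α + a)⁻¹ := by
    rw [add_assoc, haa, add_zero, fmod_ne hαa0 hαaα, fmod_alpha hα, add_zero]
  -- distinctness of T elements
  have h0a : (0 : F) ≠ a := fun h => ha0 h.symm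
  have h0α : (0 : F) ≠ α := fun h => hα h.symm
  have h0αa : (0 : F) ≠ α + a := fun h => hαa0 h.symm
  have haαa : a ≠ α + a := fun h => hαaa h.symm
  have hααa : α ≠ α + a := fun h => hαaα h.symm
  -- card of T-part
  have hTcard : (T.filter fun x : F => Fmod α x + Fmod α (x + a) = b).card =
      (if α⁻¹ + a⁻¹ = b then 2 else 0) + (if (α + a)⁻¹ = b then 2 else 0) := by
    rw [hT, Finset.card_filter,
      Finset.sum_insert (by simp [h0a, h0α, h0αa]),
      Finset.sum_insert (by simp [haα, haαa]),
      Finset.sum_insert (by simp [hααa]),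
      Finset.sum_singleton, hv0, hva, hvα, hvαa]
    split_ifs <;> omega
  -- generic part
  have hgen : (((Finset.univ : Finset F) \ T).filter
        fun x : F => Fmod α x + Fmod α (x + a) = b).card =
      (if b = 0 then 0 else if α ^ 2 + a * α + a / b = 0 then 0
        else if Tr n (1 / (a * b)) = 0 then 2 else 0) := by
    have hmem : ∀ x : F, x ∈ (Finset.univ : Finset F) \ T →
        (x ≠ 0 ∧ x ≠ a ∧ x ≠ α ∧ x ≠ α + a) := by
      intro x hx
      rw [hT] at hx
      simp only [Finset.mem_sdiff, Finset.mem_univ, true_and, Finset.mem_insert,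
        Finset.mem_singleton, not_or] at hx
      exact hx
    have hcongr : (((Finset.univ : Finset F) \ T).filter
          fun x : F => Fmod α x + Fmod α (x + a) = b) =
        (((Finset.univ : Finset F) \ T).filter fun x : F => b * (x * (x + a)) = a) := by
      apply Finset.filter_congr
      intro x hx
      obtain ⟨hx0, hxa, hxα, hxαa⟩ := hmem x hx
      have hxa0 : x + a ≠ 0 := fun h => hxa (by linear_combination h - a * h2)
      have hxaα : x + a ≠ α := fun h => hxαa (by linear_combination h - a * h2)
      have hprod : x * (x + a) ≠ 0 := mul_ne_zero hx0 hxa0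
      have e1 : x⁻¹ * (x * (x + a)) = x + a := by
        rw [← mul_assoc, inv_mul_cancel₀ hx0, one_mul]
      have e2 : (x + a)⁻¹ * (x * (x + a)) = x := by
        rw [mul_comm x (x + a), ← mul_assoc, inv_mul_cancel₀ hxa0, one_mul]
      have key : x⁻¹ + (x + a)⁻¹ = a / (x * (x + a)) := by
        rw [eq_div_iff hprod, add_mul, e1, e2]
        linear_combination x * h2
      rw [fmod_ne hx0 hxα, fmod_ne hxa0 hxaα, key, div_eq_iff hprod]
      constructor
      · intro h; linear_combination -h
      · intro h; linear_combination -h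
    rw [hcongr]
    by_cases hb : b = 0
    · subst hb
      rw [if_pos rfl, Finset.card_eq_zero, Finset.filter_eq_empty_iff]
      intro x _
      simp only [zero_mul]
      exact fun h => ha0 h.symm
    · rw [if_neg hb]
      set c : F := a / b with hc
      have hc0 : c ≠ 0 := div_ne_zero ha0 hb
      have hcongr2 : (((Finset.univ : Finset F) \ T).filter
            fun x : F => b * (x * (x + a)) = a) =
          (((Finset.univ : Finset F) \ T).filter fun x : F => x ^ 2 + a * x + c = 0) := by
        apply Finset.filter_congr
        intro x _
        rw [hc]
        constructor
        · intro h
          have hd : x ^ 2 + a * x = a / b := by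
            rw [eq_div_iff hb]
            linear_combination h
          rw [hd, CharTwo.add_self_eq_zero]
        · intro h
          have hd : x ^ 2 + a * x = a / b := by linear_combination h - (a / b) * h2
          rw [eq_div_iff hb] at hd
          linear_combination hd
      rw [hcongr2]
      -- count roots of the quadratic on T
      have hTQ : (T.filter fun x : F => x ^ 2 + a * x + c = 0).card =
          (if α ^ 2 + a * α + c = 0 then 2 else 0) := by
        have e0 : (0 : F) ^ 2 + a * 0 + c = c := by ring
        have ea : a ^ 2 + a * a + c = c := by linear_combination a ^ 2 * h2
        have eαa : (α + a) ^ 2 + a * (α + a) + c = α ^ 2 + a * α + c := by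
          linear_combination (a * α + a ^ 2) * h2
        rw [hT, Finset.card_filter,
          Finset.sum_insert (by simp [h0a, h0α, h0αa]),
          Finset.sum_insert (by simp [haα, haαa]),
          Finset.sum_insert (by simp [hααa]),
          Finset.sum_singleton, e0, ea, eαa]
        simp only [if_neg hc0]
        split_ifs <;> omega
      have htot : ((Finset.univ : Finset F).filter
            fun x : F => x ^ 2 + a * x + c = 0).card =
          if Tr n (c / a ^ 2) = 0 then 2 else 0 := quad_card hn hcard ha0 c
      have hsplitQ := filter_split (F := F) T (fun x : F => x ^ 2 + a * x + c = 0)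
      by_cases hC : α ^ 2 + a * α + c = 0
      · rw [if_pos hC]
        rw [if_pos hC] at hTQ
        have hceq : c = α ^ 2 + a * α := by linear_combination hC - (α ^ 2 + a * α) * h2
        have htr : Tr n (c / a ^ 2) = 0 := by
          have : c / a ^ 2 = (α / a) ^ 2 + α / a := by
            rw [hceq]; field_simp
          rw [this]
          exact tr_sq_add_self hcard (α / a)
        rw [if_pos htr] at htot
        omega
      · rw [if_neg hC]
        rw [if_neg hC] at hTQ
        have hca : c / a ^ 2 = 1 / (a * b) := by
          rw [hc]; field_simp
        rw [hca] at htot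
        omega
  rw [delta, filter_split T, hTcard, hgen]

/-- The master formula for `δ_{F_{0,α}}(α, b)`. -/
lemma delta_formula_alpha (hn : 0 < n) (hcard : Fintype.card F = 2 ^ n) (hα : α ≠ 0) (b : F) :
    delta (Fmod α) α b =
      (if α⁻¹ = b then 2 else 0) +
      (if b = 0 then 0 else if Tr n (1 / (α * b)) = 0 then 2 else 0) := by
  have h2 : (2 : F) = 0 := two_zero
  set T : Finset F := {0, α} with hT
  have haa : α + α = 0 := CharTwo.add_self_eq_zero α
  have hv0 : Fmod α 0 + Fmod α (0 + α) = α⁻¹ := by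
    rw [zero_add, fmod_zero, fmod_alpha hα, add_zero]
  have hvα : Fmod α α + Fmod α (α + α) = α⁻¹ := by
    rw [haa, fmod_alpha hα, fmod_zero, zero_add]
  have h0α : (0 : F) ≠ α := fun h => hα h.symm
  have hTcard : (T.filter fun x : F => Fmod α x + Fmod α (x + α) = b).card =
      (if α⁻¹ = b then 2 else 0) := by
    rw [hT, Finset.card_filter, Finset.sum_insert (by simp [h0α]),
      Finset.sum_singleton, hv0, hvα]
    split_ifs <;> omega
  have hgen : (((Finset.univ : Finset F) \ T).filter
        fun x : F => Fmod α x + Fmod α (x + α) = b).card =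
      (if b = 0 then 0 else if Tr n (1 / (α * b)) = 0 then 2 else 0) := by
    have hmem : ∀ x : F, x ∈ (Finset.univ : Finset F) \ T → (x ≠ 0 ∧ x ≠ α) := by
      intro x hx
      rw [hT] at hx
      simp only [Finset.mem_sdiff, Finset.mem_univ, true_and, Finset.mem_insert,
        Finset.mem_singleton, not_or] at hx
      exact hx
    have hcongr : (((Finset.univ : Finset F) \ T).filter
          fun x : F => Fmod α x + Fmod α (x + α) = b) =
        (((Finset.univ : Finset F) \ T).filter fun x : F => b * (x * (x + α)) = α) := by
      apply Finset.filter_congr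
      intro x hx
      obtain ⟨hx0, hxα⟩ := hmem x hx
      have hxa0 : x + α ≠ 0 := fun h => hxα (by linear_combination h - α * h2)
      have hxaα : x + α ≠ α := fun h => hx0 (by linear_combination h)
      have hprod : x * (x + α) ≠ 0 := mul_ne_zero hx0 hxa0
      have e1 : x⁻¹ * (x * (x + α)) = x + α := by
        rw [← mul_assoc, inv_mul_cancel₀ hx0, one_mul]
      have e2 : (x + α)⁻¹ * (x * (x + α)) = x := by
        rw [mul_comm x (x + α), ← mul_assoc, inv_mul_cancel₀ hxa0, one_mul]
      have key : x⁻¹ + (x + α)⁻¹ = α / (x * (x + α)) := by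
        rw [eq_div_iff hprod, add_mul, e1, e2]
        linear_combination x * h2
      rw [fmod_ne hx0 hxα, fmod_ne hxa0 hxaα, key, div_eq_iff hprod]
      constructor
      · intro h; linear_combination -h
      · intro h; linear_combination -h
    rw [hcongr]
    by_cases hb : b = 0
    · subst hb
      rw [if_pos rfl, Finset.card_eq_zero, Finset.filter_eq_empty_iff]
      intro x _
      simp only [zero_mul]
      exact fun h => hα h.symm
    · rw [if_neg hb]
      set c : F := α / b with hc
      have hc0 : c ≠ 0 := div_ne_zero hα hb
      have hcongr2 : (((Finset.univ : Finset F) \ T).filter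
            fun x : F => b * (x * (x + α)) = α) =
          (((Finset.univ : Finset F) \ T).filter fun x : F => x ^ 2 + α * x + c = 0) := by
        apply Finset.filter_congr
        intro x _
        rw [hc]
        constructor
        · intro h
          have hd : x ^ 2 + α * x = α / b := by
            rw [eq_div_iff hb]
            linear_combination h
          rw [hd, CharTwo.add_self_eq_zero]
        · intro h
          have hd : x ^ 2 + α * x = α / b := by linear_combination h - (α / b) * h2
          rw [eq_div_iff hb] at hd
          linear_combination hd
      rw [hcongr2]
      have hTQ : (T.filter fun x : F => x ^ 2 + α * x + c = 0).card = 0 := by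
        have e0 : (0 : F) ^ 2 + α * 0 + c = c := by ring
        have ea : α ^ 2 + α * α + c = c := by linear_combination α ^ 2 * h2
        rw [hT, Finset.card_filter, Finset.sum_insert (by simp [h0α]),
          Finset.sum_singleton, e0, ea]
        simp only [if_neg hc0]
      have htot : ((Finset.univ : Finset F).filter
            fun x : F => x ^ 2 + α * x + c = 0).card =
          if Tr n (c / α ^ 2) = 0 then 2 else 0 := quad_card hn hcard hα c
      have hsplitQ := filter_split (F := F) T (fun x : F => x ^ 2 + α * x + c = 0)
      have hca : c / α ^ 2 = 1 / (α * b) := by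
        rw [hc]; field_simp
      rw [hca] at htot
      omega
  rw [delta, filter_split T, hTcard, hgen]

end DeltaFormula


end Lemmas


section RowContrib

lemma nabla_pos (G : F → F) (a x : F) : 0 < nabla G a x := by
  rw [nabla, delta, Finset.card_pos]
  exact ⟨x, Finset.mem_filter.mpr ⟨Finset.mem_univ x, rfl⟩⟩

lemma row_contrib (G : F → F) (a : F) (E : Finset F)
    (hbig : ∀ b ∈ E, 2 < delta G a b)
    (hsmall : ∀ b ∉ E, delta G a b = 0 ∨ delta G a b = 2) :
    ((Sset G a).card : ℤ) - wS G a + chi G a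
      = (Fintype.card F : ℤ) - (∑ b ∈ E, (delta G a b : ℤ))
        - (∑ b ∈ E, ((delta G a b / 2 : ℕ) : ℤ) ^ 2)
        + (if E = ∅ then 1 else 0) := by
  have hS : Sset G a = Finset.univ.filter (fun x => G x + G (x + a) ∉ E) := by
    rw [Sset]
    apply Finset.filter_congr
    intro x _
    constructor
    · intro h hmem
      have := hbig _ hmem
      rw [← nabla] at this
      omega
    · intro h
      rcases hsmall _ h with h0 | h2
      · have := nabla_pos G a x
        rw [nabla] at *
        omega
      · rw [nabla, h2]
  have hcompl : (Finset.univ.filter fun x : F => G x + G (x + a) ∈ E).card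
      = ∑ b ∈ E, delta G a b := by
    rw [Finset.card_eq_sum_card_fiberwise
      (f := fun x : F => G x + G (x + a)) (t := E)
      (s := Finset.univ.filter fun x : F => G x + G (x + a) ∈ E)
      (fun x hx => (Finset.mem_filter.mp hx).2)]
    refine Finset.sum_congr rfl fun b hb => ?_
    rw [delta]
    congr 1
    rw [Finset.filter_filter]
    apply Finset.filter_congr
    intro x _
    constructor
    · exact fun h => h.2
    · exact fun h => ⟨h ▸ hb, h⟩
  have hcards : (Sset G a).card + ∑ b ∈ E, delta G a b = Fintype.card F := by
    rw [hS, ← hcompl]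
    have := Finset.card_filter_add_card_filter_not
      (s := (Finset.univ : Finset F)) (p := fun x : F => G x + G (x + a) ∈ E)
    rw [Finset.card_univ] at this
    omega
  have hwS : wS G a = ∑ b ∈ E, ((delta G a b / 2 : ℕ) : ℤ) ^ 2 := by
    rw [wS, ← Finset.sum_subset (Finset.subset_univ E)
      (fun b _ hb => by rw [if_neg]; rcases hsmall b hb with h | h <;> omega)]
    exact Finset.sum_congr rfl fun b hb => if_pos (hbig b hb)
  have hchi : chi G a = if E = ∅ then 1 else 0 := by
    by_cases hE : E = ∅
    · rw [hE] at hS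
      simp only [Finset.notMem_empty, not_false_iff, Finset.filter_true] at hS
      rw [chi, if_pos (by rw [hS]), if_pos hE]
    · obtain ⟨b, hb⟩ := Finset.nonempty_iff_ne_empty.mpr hE
      have h3 := hbig b hb
      rw [delta] at h3
      have h4 : (Finset.univ.filter fun x : F => G x + G (x + a) = b).Nonempty :=
        Finset.card_pos.mp (by omega)
      obtain ⟨x, hx0⟩ := h4
      have hx : G x + G (x + a) = b := (Finset.mem_filter.mp hx0).2
      rw [chi, if_neg, if_neg hE]
      intro hu
      have hxS : x ∈ Sset G a := hu ▸ Finset.mem_univ x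
      rw [hS, Finset.mem_filter] at hxS
      exact hxS.2 (hx ▸ hb)
  have hcast : ((Sset G a).card : ℤ) = (Fintype.card F : ℤ) - ∑ b ∈ E, (delta G a b : ℤ) := by
    have := hcards
    push_cast [← this]
    ring
  rw [hcast, hwS, hchi]

end RowContrib


section Omega

variable [CharP F 2]

lemma omega_pow_identity {ω : F} (hω : ω ^ 2 = ω + 1) :
    ∀ m : ℕ, ω ^ 2 ^ m + (ω ^ 2 ^ m) ^ 2 = 1 := by
  have h2 : (2 : F) = 0 := two_zero
  intro m
  induction m with
  | zero => simpa using by linear_combination hω + ω * h2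
  | succ m ih =>
    have hstep : ω ^ 2 ^ (m + 1) = (ω ^ 2 ^ m) ^ 2 := by
      rw [← pow_mul, pow_succ]
    rw [hstep]
    linear_combination (ω ^ 2 ^ m + (ω ^ 2 ^ m) ^ 2 + 1) * ih - (ω ^ 2 ^ m) ^ 3 * h2

lemma tr_omega_double {ω : F} (hω : ω ^ 2 = ω + 1) (m : ℕ) :
    Tr (2 * m) ω = (m : F) := by
  induction m with
  | zero => simp [Tr]
  | succ m ih =>
    have h1 : 2 * (m + 1) = (2 * m + 1) + 1 := by ring
    rw [h1, Tr, Finset.sum_range_succ, Finset.sum_range_succ, ← Tr, ih]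
    have hstep : ω ^ 2 ^ (2 * m + 1) = (ω ^ 2 ^ (2 * m)) ^ 2 := by
      rw [← pow_mul, pow_succ]
    rw [hstep]
    push_cast
    linear_combination omega_pow_identity hω (2 * m)

lemma tr_omega_mod {n : ℕ} {ω : F} (hω : ω ^ 2 = ω + 1) (heven : Even n) :
    Tr n ω = if n % 4 = 0 then 0 else 1 := by
  have h2 : (2 : F) = 0 := two_zero
  obtain ⟨m, hm⟩ := heven
  have hn : n = 2 * m := by omega
  subst hn
  rw [tr_omega_double hω]
  rcases Nat.even_or_odd m with he | ho
  · obtain ⟨j, hj⟩ := he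
    rw [if_pos (by omega)]
    have : (m : F) = 2 * j := by rw [hj]; push_cast; ring
    rw [this, h2, zero_mul]
  · obtain ⟨j, hj⟩ := ho
    rw [if_neg (by omega)]
    have : (m : F) = 2 * j + 1 := by rw [hj]; push_cast; ring
    rw [this, h2, zero_mul, zero_add]

end Omega

section Rows

variable [CharP F 2] {n : ℕ} {α : F}

lemma row_alpha_main (hn : 0 < n) (heven : Even n) (hcard : Fintype.card F = 2 ^ n)
    (hα : α ≠ 0) : delta (Fmod α) α α⁻¹ = 4 := by
  rw [delta_formula_alpha hn hcard hα, if_pos rfl, if_neg (inv_ne_zero hα)]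
  have h1 : 1 / (α * α⁻¹) = (1 : F) := by rw [mul_inv_cancel₀ hα, one_div_one]
  rw [h1, tr_one heven.two_dvd, if_pos rfl]

lemma row_alpha_small (hn : 0 < n) (hcard : Fintype.card F = 2 ^ n) (hα : α ≠ 0)
    {b : F} (hb : b ≠ α⁻¹) :
    delta (Fmod α) α b = 0 ∨ delta (Fmod α) α b = 2 := by
  rw [delta_formula_alpha hn hcard hα, if_neg (fun h => hb h.symm)]
  split_ifs <;> omega


lemma omega_class_facts (hα : α ≠ 0) {a : F} (hq : a ^ 2 + α * a + α ^ 2 = 0) :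
    a ≠ 0 ∧ a ≠ α ∧ α + a ≠ 0 ∧ (α⁻¹ + a⁻¹ = (α + a)⁻¹) := by
  have h2 : (2 : F) = 0 := two_zero
  have ha0 : a ≠ 0 := by
    intro h
    subst h
    apply hα
    have : α ^ 2 = 0 := by linear_combination hq
    exact pow_eq_zero_iff (n := 2) (by norm_num) |>.mp this
  have haα : a ≠ α := by
    intro h
    subst h
    apply hα
    have : a ^ 2 = 0 := by linear_combination hq - a ^ 2 * h2
    exact pow_eq_zero_iff (n := 2) (by norm_num) |>.mp this
  have hαa0 : α + a ≠ 0 := by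
    intro h
    exact haα (show a = α by linear_combination h - α * h2)
  refine ⟨ha0, haα, hαa0, ?_⟩
  have key : (α + a) * (α * a) * (α⁻¹ + a⁻¹) = (α + a) * (α * a) * (α + a)⁻¹ := by
    have e1 : (α + a) * (α * a) * (α⁻¹ + a⁻¹) = (α + a) * (a * (α * α⁻¹) + α * (a * a⁻¹)) := by
      ring
    have e2 : (α + a) * (α * a) * (α + a)⁻¹ = (α * a) * ((α + a) * (α + a)⁻¹) := by ring
    rw [e1, e2, mul_inv_cancel₀ hα, mul_inv_cancel₀ ha0, mul_inv_cancel₀ hαa0]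
    linear_combination hq
  exact mul_left_cancel₀ (mul_ne_zero hαa0 (mul_ne_zero hα ha0)) key

lemma row_omega_main (hn : 0 < n) (hcard : Fintype.card F = 2 ^ n) (hα : α ≠ 0)
    {a : F} (hq : a ^ 2 + α * a + α ^ 2 = 0) :
    delta (Fmod α) a ((α + a)⁻¹)
      = 4 + (if Tr n ((α + a) / a) = 0 then 2 else 0) := by
  have h2 : (2 : F) = 0 := two_zero
  obtain ⟨ha0, haα, hαa0, hb12⟩ := omega_class_facts hα hq
  rw [delta_formula hn hcard hα ha0 haα, if_pos hb12, if_pos rfl,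
    if_neg (inv_ne_zero hαa0)]
  have hC : α ^ 2 + a * α + a / (α + a)⁻¹ = (α + a) ^ 2 := by
    rw [div_eq_mul_inv, inv_inv]
    ring
  rw [hC]
  rw [if_neg (pow_ne_zero 2 hαa0)]
  have hT : 1 / (a * (α + a)⁻¹) = (α + a) / a := by
    rw [one_div, mul_inv, inv_inv, mul_comm, div_eq_mul_inv]
  rw [hT]

lemma row_omega_small (hn : 0 < n) (hcard : Fintype.card F = 2 ^ n) (hα : α ≠ 0)
    {a : F} (hq : a ^ 2 + α * a + α ^ 2 = 0) {b : F} (hb : b ≠ (α + a)⁻¹) :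
    delta (Fmod α) a b = 0 ∨ delta (Fmod α) a b = 2 := by
  obtain ⟨ha0, haα, hαa0, hb12⟩ := omega_class_facts hα hq
  rw [delta_formula hn hcard hα ha0 haα,
    if_neg (fun h => hb (hb12 ▸ h).symm), if_neg (fun h => hb h.symm)]
  split_ifs <;> omega


lemma gen_facts (hα : α ≠ 0) {a : F} (ha0 : a ≠ 0) (haα : a ≠ α)
    (hq : a ^ 2 + α * a + α ^ 2 ≠ 0) :
    α + a ≠ 0 ∧ a + α ≠ 0 ∧ (α⁻¹ + a⁻¹ = (a + α) / (α * a)) ∧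
      α⁻¹ + a⁻¹ ≠ (α + a)⁻¹ ∧ α⁻¹ + a⁻¹ ≠ 0 := by
  have h2 : (2 : F) = 0 := two_zero
  have hαa0 : α + a ≠ 0 := fun h => haα (show a = α by linear_combination h - α * h2)
  have haα0 : a + α ≠ 0 := fun h => hαa0 (by linear_combination h)
  have hb1val : α⁻¹ + a⁻¹ = (a + α) / (α * a) := by
    rw [eq_div_iff (mul_ne_zero hα ha0)]
    have e : (α⁻¹ + a⁻¹) * (α * a) = (α⁻¹ * α) * a + (a⁻¹ * a) * α := by ring
    rw [e, inv_mul_cancel₀ hα, inv_mul_cancel₀ ha0, one_mul, one_mul]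
  have hb12ne : α⁻¹ + a⁻¹ ≠ (α + a)⁻¹ := by
    intro h
    apply hq
    have key : (α + a) * (α * a) * (α⁻¹ + a⁻¹) = (α + a) * (α * a) * (α + a)⁻¹ := by rw [h]
    have e1 : (α + a) * (α * a) * (α⁻¹ + a⁻¹) = (α + a) * (a * (α * α⁻¹) + α * (a * a⁻¹)) := by
      ring
    have e2 : (α + a) * (α * a) * (α + a)⁻¹ = (α * a) * ((α + a) * (α + a)⁻¹) := by ring
    rw [e1, e2, mul_inv_cancel₀ hα, mul_inv_cancel₀ ha0, mul_inv_cancel₀ hαa0] at key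
    linear_combination key
  exact ⟨hαa0, haα0, hb1val, hb12ne, by rw [hb1val]; exact div_ne_zero haα0 (mul_ne_zero hα ha0)⟩

lemma row_gen_b1 (hn : 0 < n) (hcard : Fintype.card F = 2 ^ n) (hα : α ≠ 0)
    {a : F} (ha0 : a ≠ 0) (haα : a ≠ α) (hq : a ^ 2 + α * a + α ^ 2 ≠ 0) :
    delta (Fmod α) a (α⁻¹ + a⁻¹)
      = 2 + (if Tr n (α / (a + α)) = 0 then 2 else 0) := by
  have h2 : (2 : F) = 0 := two_zero
  obtain ⟨hαa0, haα0, hb1val, hb12ne, hb1ne0⟩ := gen_facts hα ha0 haα hq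
  rw [delta_formula hn hcard hα ha0 haα, if_pos rfl, if_neg (fun h => hb12ne h.symm),
    if_neg hb1ne0]
  have hC : α ^ 2 + a * α + a / (α⁻¹ + a⁻¹) ≠ 0 := by
    intro hC0
    apply hα
    have hmul : (α ^ 2 + a * α + a / (α⁻¹ + a⁻¹)) * (a + α) = 0 := by rw [hC0, zero_mul]
    rw [hb1val, div_div_eq_mul_div, add_mul, div_mul_cancel₀ _ haα0] at hmul
    have h3 : α ^ 3 = 0 := by linear_combination hmul - (a * α ^ 2 + a ^ 2 * α) * h2
    exact pow_eq_zero_iff (n := 3) (by norm_num) |>.mp h3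
  rw [if_neg hC]
  have hTval : 1 / (a * (α⁻¹ + a⁻¹)) = α / (a + α) := by
    rw [hb1val, ← mul_div_assoc, mul_comm α a, mul_div_mul_left _ _ ha0, one_div_div]
  rw [hTval]

lemma row_gen_b2 (hn : 0 < n) (heven : Even n) (hcard : Fintype.card F = 2 ^ n) (hα : α ≠ 0)
    {a : F} (ha0 : a ≠ 0) (haα : a ≠ α) (hq : a ^ 2 + α * a + α ^ 2 ≠ 0) :
    delta (Fmod α) a ((α + a)⁻¹)
      = 2 + (if Tr n (α / a) = 0 then 2 else 0) := by
  have h2 : (2 : F) = 0 := two_zero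
  obtain ⟨hαa0, haα0, hb1val, hb12ne, hb1ne0⟩ := gen_facts hα ha0 haα hq
  rw [delta_formula hn hcard hα ha0 haα, if_neg hb12ne, if_pos rfl,
    if_neg (inv_ne_zero hαa0)]
  have hC : α ^ 2 + a * α + a / (α + a)⁻¹ = (α + a) ^ 2 := by
    rw [div_eq_mul_inv, inv_inv]
    ring
  rw [hC, if_neg (pow_ne_zero 2 hαa0)]
  have hT : 1 / (a * (α + a)⁻¹) = (α + a) / a := by
    rw [one_div, mul_inv, inv_inv, mul_comm, div_eq_mul_inv]
  have hT2 : Tr n ((α + a) / a) = Tr n (α / a) := by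
    rw [add_div, div_self ha0, tr_add, tr_one heven.two_dvd, add_zero]
  rw [hT, hT2]

lemma row_gen_small (hn : 0 < n) (hcard : Fintype.card F = 2 ^ n) (hα : α ≠ 0)
    {a : F} (ha0 : a ≠ 0) (haα : a ≠ α)
    {b : F} (hb1 : b ≠ α⁻¹ + a⁻¹) (hb2 : b ≠ (α + a)⁻¹) :
    delta (Fmod α) a b = 0 ∨ delta (Fmod α) a b = 2 := by
  rw [delta_formula hn hcard hα ha0 haα, if_neg (fun h => hb1 h.symm),
    if_neg (fun h => hb2 h.symm)]
  split_ifs <;> omega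


lemma not_t2o {G : F → F} {a b : F} (h : delta G a b = 4 ∨ delta G a b = 6) :
    ¬ TwoToOne G a := by
  intro ht
  rcases ht b with h0 | h2 <;> rcases h with h4 | h6 <;> omega

lemma t2o_generic (hn : 0 < n) (heven : Even n) (hcard : Fintype.card F = 2 ^ n) (hα : α ≠ 0)
    {a : F} (ha0 : a ≠ 0) (haα : a ≠ α) (hq : a ^ 2 + α * a + α ^ 2 ≠ 0)
    (ht1 : Tr n (α / (a + α)) ≠ 0) (ht2 : Tr n (α / a) ≠ 0) :
    TwoToOne (Fmod α) a := by
  intro b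
  by_cases hb1 : b = α⁻¹ + a⁻¹
  · subst hb1
    rw [row_gen_b1 hn hcard hα ha0 haα hq, if_neg ht1]
    right; rfl
  by_cases hb2 : b = (α + a)⁻¹
  · subst hb2
    rw [row_gen_b2 hn heven hcard hα ha0 haα hq, if_neg ht2]
    right; rfl
  exact row_gen_small hn hcard hα ha0 haα hb1 hb2

lemma pointwise (hn : 0 < n) (heven : Even n) (hcard : Fintype.card F = 2 ^ n)
    (hα : α ≠ 0) {ω : F} (hω : ω ^ 2 = ω + 1) {a : F} (ha0 : a ≠ 0) :
    ((Sset (Fmod α) a).card : ℤ) - wS (Fmod α) a + chi (Fmod α) a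
      = (Fintype.card F : ℤ) - 8
        + (if TwoToOne (Fmod α) a then 9 else 0)
        - (if a ≠ α ∧ a ≠ α * ω ∧ a ≠ α * ω ^ 2 ∧ Tr n (α / (a + α)) = 0 ∧ Tr n (α / a) = 0
            then 8 else 0)
        - (if (a = α * ω ∨ a = α * ω ^ 2) ∧ Tr n ω = 0 then 7 else 0) := by
  have h2 : (2 : F) = 0 := two_zero
  have hω0 : ω ≠ 0 := by
    intro h; subst h
    exact one_ne_zero (show (1 : F) = 0 by linear_combination -hω)
  have hω1 : ω ≠ 1 := by
    intro h; subst h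
    exact one_ne_zero (show (1 : F) = 0 by linear_combination -hω)
  have hω3 : ω ^ 3 = 1 := by linear_combination (ω + 1) * hω + ω * h2
  by_cases haα : a = α
  · subst haα
    have hnot : ¬ TwoToOne (Fmod a) a :=
      not_t2o (Or.inl (row_alpha_main hn heven hcard hα))
    rw [row_contrib (Fmod a) a {a⁻¹}
      (fun b hb => by
        rw [Finset.mem_singleton] at hb
        subst hb
        rw [row_alpha_main hn heven hcard hα]; omega)
      (fun b hb => row_alpha_small hn hcard hα (by simpa using hb))]
    rw [Finset.sum_singleton, Finset.sum_singleton, row_alpha_main hn heven hcard hα,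
      if_neg (Finset.singleton_ne_empty _), if_neg hnot,
      if_neg (show ¬(a ≠ a ∧ _) from fun hc => hc.1 rfl),
      if_neg (show ¬((a = a * ω ∨ a = a * ω ^ 2) ∧ Tr n ω = 0) from ?_)]
    · norm_num
      try omega
    · rintro ⟨hc | hc, -⟩
      · exact hω1 (mul_left_cancel₀ hα (by rw [mul_one, ← hc])).symm
      · have : ω ^ 2 = 1 := (mul_left_cancel₀ hα (by rw [mul_one, ← hc])).symm
        exact hω0 (by linear_combination this - hω)
  · by_cases hq : a ^ 2 + α * a + α ^ 2 = 0
    · -- a is αω or αω²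
      have hfac : (a + α * ω) * (a + α * ω ^ 2) = a ^ 2 + α * a + α ^ 2 := by
        linear_combination (a * α + α ^ 2 * ω + α ^ 2) * hω + (a * α * ω + α ^ 2 * ω) * h2
      have hcase : a = α * ω ∨ a = α * ω ^ 2 := by
        rcases mul_eq_zero.mp (hfac.trans hq) with h | h
        · exact Or.inl (by linear_combination h - α * ω * h2)
        · exact Or.inr (by linear_combination h - α * ω ^ 2 * h2)
      obtain ⟨_, _, hαa0, -⟩ := omega_class_facts hα hq
      have htrval : Tr n ((α + a) / a) = Tr n ω := by
        rcases hcase with hc | hc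
        · subst hc
          have : (α + α * ω) / (α * ω) = ω := by
            rw [div_eq_iff (mul_ne_zero hα hω0)]
            linear_combination (-α) * hω
          rw [this]
        · subst hc
          have hω2ne : α * ω ^ 2 ≠ 0 := mul_ne_zero hα (pow_ne_zero 2 hω0)
          have : (α + α * ω ^ 2) / (α * ω ^ 2) = ω ^ 2 := by
            rw [div_eq_iff hω2ne]
            have e : ω ^ 2 * (α * ω ^ 2) = α * ω * ω ^ 3 := by ring
            rw [e, hω3, mul_one]
            linear_combination α * hω + α * h2
          rw [this, tr_sq hcard]
      have hd : delta (Fmod α) a ((α + a)⁻¹)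
          = 4 + (if Tr n ω = 0 then 2 else 0) := by
        rw [row_omega_main hn hcard hα hq, htrval]
      have hnot : ¬ TwoToOne (Fmod α) a := by
        apply not_t2o (b := (α + a)⁻¹)
        rw [hd]
        split_ifs <;> omega
      have hsecond : ¬(a ≠ α ∧ a ≠ α * ω ∧ a ≠ α * ω ^ 2 ∧
          Tr n (α / (a + α)) = 0 ∧ Tr n (α / a) = 0) := by
        rintro ⟨-, h1, h1', -⟩
        rcases hcase with hc | hc
        · exact h1 hc
        · exact h1' hc
      rw [row_contrib (Fmod α) a {(α + a)⁻¹}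
        (fun b hb => by
          rw [Finset.mem_singleton] at hb
          subst hb
          rw [hd]
          split_ifs <;> omega)
        (fun b hb => row_omega_small hn hcard hα hq (by simpa using hb))]
      rw [Finset.sum_singleton, Finset.sum_singleton, hd,
        if_neg (Finset.singleton_ne_empty _), if_neg hnot, if_neg hsecond]
      by_cases htr : Tr n ω = 0
      · rw [if_pos htr, if_pos ⟨hcase, htr⟩]
        norm_num
        try omega
      · rw [if_neg htr, if_neg (fun hc => htr hc.2)]
        norm_num
        try omega
    · -- generic a
      have hane1 : a ≠ α * ω := by
        intro h; subst h
        exact hq (by linear_combination α ^ 2 * hω + (α ^ 2 * ω + α ^ 2) * h2)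
      have hane2 : a ≠ α * ω ^ 2 := by
        intro h; subst h
        apply hq
        have e : (α * ω ^ 2) ^ 2 + α * (α * ω ^ 2) + α ^ 2
            = α ^ 2 * (ω ^ 3 * ω + ω ^ 2 + 1) := by ring
        rw [e, hω3, one_mul]
        linear_combination α ^ 2 * hω + α ^ 2 * h2 + α ^ 2 * ω * h2
      obtain ⟨hαa0, haα0, hb1val, hb12ne, hb1ne0⟩ := gen_facts hα ha0 haα hq
      have hthird : ¬((a = α * ω ∨ a = α * ω ^ 2) ∧ Tr n ω = 0) := by
        rintro ⟨hc | hc, -⟩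
        · exact hane1 hc
        · exact hane2 hc
      rw [if_neg hthird]
      by_cases ht1 : Tr n (α / (a + α)) = 0 <;> by_cases ht2 : Tr n (α / a) = 0
      · -- two 4-rows
        have hd1 : delta (Fmod α) a (α⁻¹ + a⁻¹) = 4 := by
          rw [row_gen_b1 hn hcard hα ha0 haα hq, if_pos ht1]
        have hd2 : delta (Fmod α) a ((α + a)⁻¹) = 4 := by
          rw [row_gen_b2 hn heven hcard hα ha0 haα hq, if_pos ht2]
        have hnot : ¬ TwoToOne (Fmod α) a := not_t2o (Or.inl hd1)
        rw [row_contrib (Fmod α) a {α⁻¹ + a⁻¹, (α + a)⁻¹}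
          (fun b hb => by
            rcases Finset.mem_insert.mp hb with rfl | hb
            · rw [hd1]; omega
            · rw [Finset.mem_singleton] at hb; subst hb; rw [hd2]; omega)
          (fun b hb => by
            rw [Finset.mem_insert, Finset.mem_singleton, not_or] at hb
            exact row_gen_small hn hcard hα ha0 haα hb.1 hb.2)]
        rw [Finset.sum_pair hb12ne, Finset.sum_pair hb12ne, hd1, hd2,
          if_neg (Finset.insert_ne_empty _ _), if_neg hnot,
          if_pos ⟨haα, hane1, hane2, ht1, ht2⟩]
        norm_num
        try omega
      · -- one 4-row at b1
        have hd1 : delta (Fmod α) a (α⁻¹ + a⁻¹) = 4 := by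
          rw [row_gen_b1 hn hcard hα ha0 haα hq, if_pos ht1]
        have hnot : ¬ TwoToOne (Fmod α) a := not_t2o (Or.inl hd1)
        rw [row_contrib (Fmod α) a {α⁻¹ + a⁻¹}
          (fun b hb => by
            rw [Finset.mem_singleton] at hb; subst hb; rw [hd1]; omega)
          (fun b hb => by
            rw [Finset.mem_singleton] at hb
            by_cases hb2 : b = (α + a)⁻¹
            · subst hb2
              rw [row_gen_b2 hn heven hcard hα ha0 haα hq, if_neg ht2]
              right; rfl
            · exact row_gen_small hn hcard hα ha0 haα hb hb2)]
        rw [Finset.sum_singleton, Finset.sum_singleton, hd1,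
          if_neg (Finset.singleton_ne_empty _), if_neg hnot,
          if_neg (fun hc => ht2 hc.2.2.2.2)]
        norm_num
        try omega
      · -- one 4-row at b2
        have hd2 : delta (Fmod α) a ((α + a)⁻¹) = 4 := by
          rw [row_gen_b2 hn heven hcard hα ha0 haα hq, if_pos ht2]
        have hnot : ¬ TwoToOne (Fmod α) a := not_t2o (Or.inl hd2)
        rw [row_contrib (Fmod α) a {(α + a)⁻¹}
          (fun b hb => by
            rw [Finset.mem_singleton] at hb; subst hb; rw [hd2]; omega)
          (fun b hb => by
            rw [Finset.mem_singleton] at hb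
            by_cases hb1 : b = α⁻¹ + a⁻¹
            · subst hb1
              rw [row_gen_b1 hn hcard hα ha0 haα hq, if_neg ht1]
              right; rfl
            · exact row_gen_small hn hcard hα ha0 haα hb1 hb)]
        rw [Finset.sum_singleton, Finset.sum_singleton, hd2,
          if_neg (Finset.singleton_ne_empty _), if_neg hnot,
          if_neg (fun hc => ht1 hc.2.2.2.1)]
        norm_num
        try omega
      · -- 2-to-1 row
        have ht2o : TwoToOne (Fmod α) a :=
          t2o_generic hn heven hcard hα ha0 haα hq ht1 ht2
        rw [row_contrib (Fmod α) a ∅ (fun b hb => absurd hb (Finset.notMem_empty b))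
          (fun b _ => ht2o b)]
        rw [Finset.sum_empty, Finset.sum_empty, if_pos rfl, if_pos ht2o,
          if_neg (fun hc => ht1 hc.2.2.2.1)]
        norm_num
        try omega

end Rows
/-- the APN-defect of `F_{0,α}` for even `n ≥ 4`. -/
theorem stmt_13 (n : ℕ) (hn : 4 ≤ n) (heven : Even n)
    [CharP F 2] (hcard : Fintype.card F = 2 ^ n)
    (α : F) (hα : α ≠ 0) (ω : F) (hω : ω ^ 2 = ω + 1) (k s : ℕ)
    (hk : k = (RSpec (Fmod α)).card)
    (hs : s = ((Finset.univ.filter fun a : F =>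
      a ≠ 0 ∧ a ≠ α ∧ a ≠ α * ω ∧ a ≠ α * ω ^ 2 ∧
        Tr n (α / (a + α)) = 0 ∧ Tr n (α / a) = 0)).card) :
    (n % 4 = 2 →
      APNdef (Fmod α) = 9 * (2 : ℤ) ^ n + 8 * (s : ℤ) - 9 * (k : ℤ) - 9) ∧
    (n % 4 = 0 →
      APNdef (Fmod α) = 9 * (2 : ℤ) ^ n + 8 * (s : ℤ) - 9 * (k : ℤ) + 5) := by
  have hn0 : 0 < n := by omega
  have h2 : (2 : F) = 0 := two_zero
  have hω0 : ω ≠ 0 := by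
    intro h; subst h
    exact one_ne_zero (show (1 : F) = 0 by linear_combination -hω)
  have hωω2 : α * ω ≠ α * ω ^ 2 := by
    intro h
    have := mul_left_cancel₀ hα h
    exact one_ne_zero (show (1 : F) = 0 by linear_combination -hω - this)
  have hαω0 : α * ω ≠ 0 := mul_ne_zero hα hω0
  have hαω20 : α * ω ^ 2 ≠ 0 := mul_ne_zero hα (pow_ne_zero 2 hω0)
  have hsum_const : ∀ (c : ℤ) (p : F → Prop) (_ : DecidablePred p) (t : Finset F),
      (∑ a ∈ t, if p a then c else 0) = c * ((t.filter p).card : ℤ) := by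
    intro c p hp t
    rw [Finset.sum_ite, Finset.sum_const, Finset.sum_const_zero, add_zero,
      nsmul_eq_mul, mul_comm]
  have key : Dscr (Fmod α)
      = ((Fintype.card F : ℤ) - 1) * ((Fintype.card F : ℤ) - 8)
        + 9 * (k : ℤ) - 8 * (s : ℤ) - (if Tr n ω = 0 then 14 else 0) := by
    rw [Dscr]
    rw [Finset.sum_congr rfl (fun a ha =>
      pointwise hn0 heven hcard hα hω (Finset.mem_erase.mp ha).1)]
    rw [Finset.sum_sub_distrib, Finset.sum_sub_distrib, Finset.sum_add_distrib,
      Finset.sum_const]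
    have hcarderase : (Finset.univ.erase (0 : F)).card = Fintype.card F - 1 := by
      rw [Finset.card_erase_of_mem (Finset.mem_univ _), Finset.card_univ]
    have hq1 : (1 : ℕ) ≤ Fintype.card F := Fintype.card_pos
    have e1 : ((Finset.univ.erase (0 : F)).card : ℤ) • ((Fintype.card F : ℤ) - 8)
        = ((Fintype.card F : ℤ) - 1) * ((Fintype.card F : ℤ) - 8) := by
      rw [hcarderase, smul_eq_mul]
      congr 1
      push_cast [hq1]
      ring
    have e2 : (∑ a ∈ Finset.univ.erase (0 : F),
        if TwoToOne (Fmod α) a then (9 : ℤ) else 0) = 9 * (k : ℤ) := by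
      rw [hsum_const 9 _ _ _, hk]
      rfl
    have e3 : (∑ a ∈ Finset.univ.erase (0 : F),
        if a ≠ α ∧ a ≠ α * ω ∧ a ≠ α * ω ^ 2 ∧
            Tr n (α / (a + α)) = 0 ∧ Tr n (α / a) = 0 then (8 : ℤ) else 0)
        = 8 * (s : ℤ) := by
      have hset : (Finset.univ.erase (0 : F)).filter
          (fun a => a ≠ α ∧ a ≠ α * ω ∧ a ≠ α * ω ^ 2 ∧
            Tr n (α / (a + α)) = 0 ∧ Tr n (α / a) = 0)
          = Finset.univ.filter (fun a : F => a ≠ 0 ∧ a ≠ α ∧ a ≠ α * ω ∧ a ≠ α * ω ^ 2 ∧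
            Tr n (α / (a + α)) = 0 ∧ Tr n (α / a) = 0) := by
        ext a
        simp only [Finset.mem_filter, Finset.mem_erase, Finset.mem_univ, true_and, and_assoc]
      rw [hsum_const 8 _ _ _, hset, hs]
    have e4 : (∑ a ∈ Finset.univ.erase (0 : F),
        if (a = α * ω ∨ a = α * ω ^ 2) ∧ Tr n ω = 0 then (7 : ℤ) else 0)
        = (if Tr n ω = 0 then 14 else 0) := by
      by_cases htr : Tr n ω = 0
      · rw [if_pos htr]
        have hcongr : (∑ a ∈ Finset.univ.erase (0 : F),
            if (a = α * ω ∨ a = α * ω ^ 2) ∧ Tr n ω = 0 then (7 : ℤ) else 0)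
            = ∑ a ∈ Finset.univ.erase (0 : F),
              if a = α * ω ∨ a = α * ω ^ 2 then (7 : ℤ) else 0 := by
          refine Finset.sum_congr rfl (fun a _ => ?_)
          by_cases hmem : a = α * ω ∨ a = α * ω ^ 2
          · rw [if_pos ⟨hmem, htr⟩, if_pos hmem]
          · rw [if_neg (fun hc => hmem hc.1), if_neg hmem]
        rw [hcongr, hsum_const 7 _ _ _]
        have : (Finset.univ.erase (0 : F)).filter
            (fun a => a = α * ω ∨ a = α * ω ^ 2) = {α * ω, α * ω ^ 2} := by
          ext a
          simp only [Finset.mem_filter, Finset.mem_erase, Finset.mem_univ, true_and,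
            and_true, Finset.mem_insert, Finset.mem_singleton]
          constructor
          · exact fun h => h.2
          · rintro (rfl | rfl)
            · exact ⟨hαω0, Or.inl rfl⟩
            · exact ⟨hαω20, Or.inr rfl⟩
        rw [this, Finset.card_insert_of_notMem (by simpa using hωω2),
          Finset.card_singleton]
        norm_num
      · rw [if_neg htr]
        rw [Finset.sum_congr rfl (fun a _ => if_neg (fun hc => htr hc.2)),
          Finset.sum_const_zero]
    rw [e2, e3, e4]
    rw [show ((Finset.univ.erase (0 : F)).card • ((Fintype.card F : ℤ) - 8))
      = ((Fintype.card F : ℤ) - 1) * ((Fintype.card F : ℤ) - 8) from e1]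
  have hq2 : (Fintype.card F : ℤ) = (2 : ℤ) ^ n := by rw [hcard]; push_cast; ring
  have htrval := tr_omega_mod (n := n) hω heven
  constructor
  · intro hmod
    rw [APNdef, key, htrval, if_neg (by omega : ¬ n % 4 = 0)]
    rw [if_neg (one_ne_zero)]
    rw [hq2]
    ring
  · intro hmod
    rw [APNdef, key, htrval, if_pos hmod, if_pos rfl, hq2]
    ring


end APNPaper
end

section
/- Let q = 2^n and G : 𝔽_q → 𝔽_q be any function. Then APN-def(G) = q − 12·|VF_G| + Σ_{a ∈ 𝔽_q^*} (3·w_{S_a^c} − χ_a) − 1. -/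
namespace APNPaper

open Finset

variable {F : Type*} [Field F] [Fintype F] [DecidableEq F]

section
variable [CharP F 2]

lemma even_of_invol (a : F) (ha : a ≠ 0) :
    ∀ s : Finset F, (∀ x ∈ s, x + a ∈ s) → Even s.card := by
  intro s
  induction s using Finset.strongInduction with
  | _ s ih =>
    intro hs
    rcases s.eq_empty_or_nonempty with rfl | ⟨x, hx⟩
    · simp
    · have hxa : x + a ∈ s := hs x hx
      have hne : x + a ≠ x := fun h => ha (by linear_combination h)
      set t := (s.erase x).erase (x + a) with hts
      have hxt : x ∉ t := fun h => (Finset.mem_erase.mp (Finset.mem_erase.mp h).2).1 rfl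
      have hsub : t ⊆ s := (Finset.erase_subset _ _).trans (Finset.erase_subset _ _)
      have hss : t ⊂ s := Finset.ssubset_iff_of_subset hsub |>.mpr ⟨x, hx, hxt⟩
      have hinv : ∀ y ∈ t, y + a ∈ t := by
        intro y hy
        rcases Finset.mem_erase.mp hy with ⟨hy1, hy2⟩
        rcases Finset.mem_erase.mp hy2 with ⟨hy3, hy4⟩
        refine Finset.mem_erase.mpr ⟨?_, Finset.mem_erase.mpr ⟨?_, hs y hy4⟩⟩
        · intro h; exact hy3 (by linear_combination h)
        · intro h
          exact hy1 (by linear_combination h - CharTwo.add_self_eq_zero a)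
      have hcard : s.card = t.card + 2 := by
        have h1 : (s.erase x).card = s.card - 1 := Finset.card_erase_of_mem hx
        have h2 : t.card = (s.erase x).card - 1 :=
          Finset.card_erase_of_mem (Finset.mem_erase.mpr ⟨hne, hxa⟩)
        have h3 : 2 ≤ s.card := by
          have := Finset.one_lt_card.mpr ⟨x, hx, x + a, hxa, fun h => hne h.symm⟩
          omega
        omega
      rw [hcard]
      exact (ih t hss hinv).add (Even.add_self 1)

variable (G : F → F)

lemma delta_even {a : F} (ha : a ≠ 0) (b : F) : Even (delta G a b) := by
  apply even_of_invol a ha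
  intro x hx
  simp only [Finset.mem_filter, Finset.mem_univ, true_and] at hx ⊢
  rw [add_assoc, CharTwo.add_self_eq_zero, add_zero, add_comm]
  exact hx

lemma sum_delta (a : F) : ∑ b : F, delta G a b = Fintype.card F := by
  rw [← Finset.card_univ,
    Finset.card_eq_sum_card_fiberwise
      (f := fun x : F => G x + G (x + a)) (t := Finset.univ) (fun x _ => Finset.mem_univ _)]
  rfl

lemma card_S (a : F) :
    (Sset G a).card = ∑ b : F, if delta G a b = 2 then delta G a b else 0 := by
  rw [Finset.card_eq_sum_card_fiberwise
      (f := fun x : F => G x + G (x + a)) (t := Finset.univ) (fun x _ => Finset.mem_univ _)]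
  refine Finset.sum_congr rfl fun b _ => ?_
  by_cases h : delta G a b = 2
  · rw [if_pos h]
    show _ = (Finset.univ.filter fun x : F => G x + G (x + a) = b).card
    congr 1
    ext x
    simp only [Sset, nabla, Finset.mem_filter, Finset.mem_univ, true_and]
    constructor
    · rintro ⟨-, h2⟩; exact h2
    · intro h2; exact ⟨Finset.mem_filter.mpr ⟨Finset.mem_univ _, by show nabla G a x = 2; unfold nabla; rw [h2]; exact h⟩, h2⟩
  · rw [if_neg h, Finset.card_eq_zero, Finset.eq_empty_iff_forall_notMem]
    intro x hx
    simp only [Sset, nabla, Finset.mem_filter, Finset.mem_univ, true_and] at hx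
    exact h (hx.2 ▸ (Finset.mem_filter.mp hx.1).2)

lemma card_M (a : F) :
    (Finset.univ.filter fun t : F × F =>
        G t.1 + G (t.1 + a) = G t.2 + G (t.2 + a)).card
      = ∑ b : F, (delta G a b) ^ 2 := by
  rw [Finset.card_eq_sum_card_fiberwise
      (f := fun t : F × F => G t.1 + G (t.1 + a)) (t := Finset.univ) (fun x _ => Finset.mem_univ _)]
  refine Finset.sum_congr rfl fun b _ => ?_
  have : ((Finset.univ.filter fun t : F × F =>
      G t.1 + G (t.1 + a) = G t.2 + G (t.2 + a)).filter
        fun t => G t.1 + G (t.1 + a) = b)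
      = (Finset.univ.filter fun x : F => G x + G (x + a) = b) ×ˢ
        (Finset.univ.filter fun x : F => G x + G (x + a) = b) := by
    ext t
    simp only [Finset.mem_filter, Finset.mem_univ, true_and, Finset.mem_product]
    constructor
    · rintro ⟨h1, h2⟩; exact ⟨h2, h1 ▸ h2⟩
    · rintro ⟨h1, h2⟩; exact ⟨h1.trans h2.symm, h1⟩
  rw [this, Finset.card_product, sq]
  rfl

def Nset (G : F → F) (a : F) : Finset (F × F) :=
  Finset.univ.filter fun t : F × F =>
    (G t.1 + G (t.1 + a) = G t.2 + G (t.2 + a)) ∧ t.2 ≠ t.1 ∧ t.2 ≠ t.1 + a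

lemma card_N {a : F} (ha : a ≠ 0) :
    (Nset G a).card + 2 * Fintype.card F = ∑ b : F, (delta G a b) ^ 2 := by
  rw [← card_M G a]
  set M := Finset.univ.filter fun t : F × F =>
    G t.1 + G (t.1 + a) = G t.2 + G (t.2 + a) with hM
  have key := Finset.card_filter_add_card_filter_not
    (s := M) (p := fun t : F × F => t.2 = t.1 ∨ t.2 = t.1 + a)
  have h1 : M.filter (fun t : F × F => ¬(t.2 = t.1 ∨ t.2 = t.1 + a)) = Nset G a := by
    ext t
    simp only [hM, Nset, Finset.mem_filter, Finset.mem_univ, true_and, not_or]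
  have h2 : M.filter (fun t : F × F => t.2 = t.1 ∨ t.2 = t.1 + a)
      = (Finset.univ.filter fun t : F × F => t.2 = t.1) ∪
        (Finset.univ.filter fun t : F × F => t.2 = t.1 + a) := by
    ext t
    simp only [hM, Finset.mem_filter, Finset.mem_univ, true_and, Finset.mem_union]
    constructor
    · rintro ⟨-, h⟩; exact h
    · rintro (h | h)
      · exact ⟨by rw [h], Or.inl h⟩
      · refine ⟨?_, Or.inr h⟩
        rw [h, add_assoc, CharTwo.add_self_eq_zero, add_zero, add_comm]
  have hd : Disjoint (Finset.univ.filter fun t : F × F => t.2 = t.1)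
      (Finset.univ.filter fun t : F × F => t.2 = t.1 + a) := by
    rw [Finset.disjoint_filter]
    intro t _ h1 h2
    exact ha (by linear_combination h1 - h2)
  have c1 : (Finset.univ.filter fun t : F × F => t.2 = t.1).card = Fintype.card F := by
    rw [← Finset.card_univ (α := F)]
    apply Finset.card_nbij' (i := fun t => t.1) (j := fun x => (x, x)) <;>
      simp +contextual [Prod.ext_iff, Set.LeftInvOn, Set.RightInvOn]
  have c2 : (Finset.univ.filter fun t : F × F => t.2 = t.1 + a).card = Fintype.card F := by
    rw [← Finset.card_univ (α := F)]
    apply Finset.card_nbij' (i := fun t => t.1) (j := fun x => (x, x + a)) <;>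
      simp +contextual [Prod.ext_iff, Set.LeftInvOn, Set.RightInvOn]
  rw [h1, h2, Finset.card_union_of_disjoint hd, c1, c2] at key
  omega

lemma per_a {a : F} (ha : a ≠ 0) :
    ((Nset G a).card : ℤ)
      = 4 * wS G a + 2 * ((Sset G a).card : ℤ) - 2 * (Fintype.card F : ℤ) := by
  have h1 := card_N G ha
  have h2 : ((Nset G a).card : ℤ) + 2 * (Fintype.card F : ℤ)
      = ∑ b : F, ((delta G a b : ℤ)) ^ 2 := by exact_mod_cast congrArg (Nat.cast : ℕ → ℤ) h1
  have h3 : ∑ b : F, ((delta G a b : ℤ)) ^ 2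
      = 4 * wS G a + 2 * ((Sset G a).card : ℤ) := by
    rw [card_S, wS, Finset.mul_sum, Nat.cast_sum, Finset.mul_sum, ← Finset.sum_add_distrib]
    refine Finset.sum_congr rfl fun b _ => ?_
    obtain ⟨k, hk⟩ := delta_even G ha b
    have hkk : delta G a b = 2 * k := by omega
    rcases Nat.lt_or_ge k 2 with hk2 | hk2
    · interval_cases k <;> simp_all
    · have hlt : 2 < delta G a b := by omega
      have hne : delta G a b ≠ 2 := by omega
      rw [if_pos hlt, if_neg hne, hkk]
      have hdiv : 2 * k / 2 = k := by omega
      rw [hdiv]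
      push_cast
      ring
  rw [h3] at h2
  linarith

def Pset (G : F → F) : Finset (F × F × F) :=
  Finset.univ.filter fun t : F × F × F =>
    t.1 ≠ 0 ∧ (G t.2.1 + G (t.2.1 + t.1) = G t.2.2 + G (t.2.2 + t.1)) ∧
      t.2.2 ≠ t.2.1 ∧ t.2.2 ≠ t.2.1 + t.1

lemma card_P :
    (Pset G).card = ∑ a ∈ Finset.univ.erase (0 : F), (Nset G a).card := by
  rw [Finset.card_eq_sum_card_fiberwise (f := fun t : F × F × F => t.1)
      (t := Finset.univ.erase (0 : F))
      (fun t ht => Finset.mem_erase.mpr ⟨(Finset.mem_filter.mp ht).2.1, Finset.mem_univ _⟩)]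
  refine Finset.sum_congr rfl fun a ha => ?_
  have ha0 : a ≠ 0 := (Finset.mem_erase.mp ha).1
  apply Finset.card_nbij' (i := fun t => t.2) (j := fun x => (a, x))
  · intro t ht; obtain ⟨a', x, z⟩ := t
    simp only [Finset.mem_coe, Pset, Nset, Finset.mem_filter, Finset.mem_univ, true_and] at ht ⊢
    obtain ⟨⟨-, h2, h3, h4⟩, h5⟩ := ht
    subst h5
    exact ⟨h2, h3, h4⟩
  · intro x hx
    simp only [Finset.mem_coe, Pset, Nset, Finset.mem_filter, Finset.mem_univ, true_and,
      and_true] at hx ⊢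
    exact ⟨ha0, hx.1, hx.2.1, hx.2.2⟩
  · intro t ht
    simp only [Finset.mem_coe, Finset.mem_filter] at ht
    rw [← ht.2]
  · intro x _
    rfl

def Q3 (G : F → F) : Finset (F × F × F) :=
  Finset.univ.filter fun t : F × F × F =>
    t.1 ≠ t.2.1 ∧ t.1 ≠ t.2.2 ∧ t.2.1 ≠ t.2.2 ∧
      G t.1 + G t.2.1 + G t.2.2 + G (t.1 + t.2.1 + t.2.2) = 0

lemma card_Q3_eq_P : (Q3 G).card = (Pset G).card := by
  apply Finset.card_nbij' (i := fun t : F × F × F => (t.1 + t.2.1, t.1, t.2.2))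
    (j := fun t : F × F × F => (t.2.1, t.2.1 + t.1, t.2.2))
  · intro t ht; obtain ⟨x, y, z⟩ := t
    simp only [Finset.mem_coe, Q3, Pset, Finset.mem_filter, Finset.mem_univ, true_and] at ht ⊢
    obtain ⟨hxy, hxz, hyz, hG⟩ := ht
    have e1 : x + (x + y) = y := by linear_combination CharTwo.add_self_eq_zero x
    have e2 : z + (x + y) = x + y + z := by ring
    refine ⟨fun h => hxy (by linear_combination h - CharTwo.add_self_eq_zero y), ?_,
      fun h => hxz h.symm,
      fun h => hyz (by rw [← e1, ← h])⟩
    rw [e1, e2]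
    linear_combination hG - CharTwo.add_self_eq_zero (G z)
      - CharTwo.add_self_eq_zero (G (x + y + z))
  · intro t ht; obtain ⟨a, x, z⟩ := t
    simp only [Finset.mem_coe, Q3, Pset, Finset.mem_filter, Finset.mem_univ, true_and] at ht ⊢
    obtain ⟨ha, hD, hzx, hza⟩ := ht
    have e3 : x + (x + a) + z = z + a := by
      linear_combination CharTwo.add_self_eq_zero x
    refine ⟨fun h => ha (by linear_combination -h), fun h => hzx h.symm,
      fun h => hza h.symm, ?_⟩
    rw [e3]
    linear_combination hD + CharTwo.add_self_eq_zero (G z)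
      + CharTwo.add_self_eq_zero (G (z + a))
  · rintro ⟨x, y, z⟩ ht
    have e : x + (x + y) = y := by linear_combination CharTwo.add_self_eq_zero x
    simp [Prod.ext_iff, e]
  · rintro ⟨a, x, z⟩ ht
    have e : x + (x + a) = a := by linear_combination CharTwo.add_self_eq_zero x
    simp [Prod.ext_iff, e]



lemma card_Q3_eq_VF : (Q3 G).card = 24 * (VF G).ncard := by
  classical
  have hfin : (VF G).Finite := Set.toFinite _
  rw [Set.ncard_eq_toFinset_card _ hfin]
  have hmaps : ∀ t ∈ Q3 G,
      ({t.1, t.2.1, t.2.2, t.1 + t.2.1 + t.2.2} : Finset F) ∈ hfin.toFinset := by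
    rintro ⟨x, y, z⟩ ht
    simp only [Q3, Finset.mem_filter, Finset.mem_univ, true_and] at ht
    rw [Set.Finite.mem_toFinset]
    exact ⟨x, y, z, ht.1, ht.2.1, ht.2.2.1, ht.2.2.2, rfl⟩
  rw [Finset.card_eq_sum_card_fiberwise hmaps]
  have fib24 : ∀ S ∈ hfin.toFinset,
      ((Q3 G).filter
        (fun t : F × F × F => ({t.1, t.2.1, t.2.2, t.1 + t.2.1 + t.2.2} : Finset F) = S)).card
      = 24 := by
    intro S hS
    obtain ⟨x, y, z, hxy, hxz, hyz, hG, hSeq⟩ := (Set.Finite.mem_toFinset hfin).mp hS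
    have hwx : x + y + z ≠ x := fun h =>
      hyz (by linear_combination h - CharTwo.add_self_eq_zero z)
    have hwy : x + y + z ≠ y := fun h =>
      hxz (by linear_combination h - CharTwo.add_self_eq_zero z)
    have hwz : x + y + z ≠ z := fun h =>
      hxy (by linear_combination h - CharTwo.add_self_eq_zero y)
    have hxw : x ≠ x + y + z := Ne.symm hwx
    have hyw : y ≠ x + y + z := Ne.symm hwy
    have hzw : z ≠ x + y + z := Ne.symm hwz
    have hcard4 : S.card = 4 := by
      rw [hSeq, Finset.card_insert_of_notMem (by simp [hxy, hxz, hxw]),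
        Finset.card_insert_of_notMem (by simp [hyz, hyw]),
        Finset.card_insert_of_notMem (by simp [hzw]), Finset.card_singleton]
    have hsum0 : ∑ u ∈ S, u = 0 := by
      rw [hSeq, Finset.sum_insert (by simp [hxy, hxz, hxw]),
        Finset.sum_insert (by simp [hyz, hyw]),
        Finset.sum_insert (by simp [hzw]), Finset.sum_singleton]
      linear_combination CharTwo.add_self_eq_zero x + CharTwo.add_self_eq_zero y
        + CharTwo.add_self_eq_zero z
    have hGsum0 : ∑ u ∈ S, G u = 0 := by
      rw [hSeq, Finset.sum_insert (by simp [hxy, hxz, hxw]),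
        Finset.sum_insert (by simp [hyz, hyw]),
        Finset.sum_insert (by simp [hzw]), Finset.sum_singleton]
      linear_combination hG
    have hfib : (Q3 G).filter
        (fun t : F × F × F => ({t.1, t.2.1, t.2.2, t.1 + t.2.1 + t.2.2} : Finset F) = S)
        = (S ×ˢ S ×ˢ S).filter
            (fun t : F × F × F => t.1 ≠ t.2.1 ∧ t.1 ≠ t.2.2 ∧ t.2.1 ≠ t.2.2) := by
      ext ⟨p, q, r⟩
      simp only [Q3, Finset.mem_filter, Finset.mem_univ, true_and, Finset.mem_product]
      constructor
      · rintro ⟨⟨h1, h2, h3, h4⟩, h5⟩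
        refine ⟨⟨?_, ?_, ?_⟩, h1, h2, h3⟩ <;> rw [← h5] <;> simp
      · rintro ⟨⟨hp, hq, hr⟩, h1, h2, h3⟩
        have hq' : q ∈ S.erase p := Finset.mem_erase.mpr ⟨Ne.symm h1, hq⟩
        have hr' : r ∈ (S.erase p).erase q :=
          Finset.mem_erase.mpr ⟨Ne.symm h3, Finset.mem_erase.mpr ⟨Ne.symm h2, hr⟩⟩
        have hcard1 : (((S.erase p).erase q).erase r).card = 1 := by
          rw [Finset.card_erase_of_mem hr', Finset.card_erase_of_mem hq',
            Finset.card_erase_of_mem hp, hcard4]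
        obtain ⟨u, hu⟩ := Finset.card_eq_one.mp hcard1
        have hu' : u ∈ ((S.erase p).erase q).erase r := by
          rw [hu]; exact Finset.mem_singleton_self u
        have hur : u ≠ r := (Finset.mem_erase.mp hu').1
        have huq : u ≠ q := (Finset.mem_erase.mp (Finset.mem_erase.mp hu').2).1
        have hup : u ≠ p :=
          (Finset.mem_erase.mp (Finset.mem_erase.mp (Finset.mem_erase.mp hu').2).2).1
        have hSrep : S = insert p (insert q (insert r {u})) := by
          rw [← hu, Finset.insert_erase hr', Finset.insert_erase hq',
            Finset.insert_erase hp]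
        have hnm1 : p ∉ insert q (insert r ({u} : Finset F)) := by
          simp [h1, h2, Ne.symm hup]
        have hnm2 : q ∉ insert r ({u} : Finset F) := by simp [h3, Ne.symm huq]
        have hnm3 : r ∉ ({u} : Finset F) := by simp [Ne.symm hur]
        have hsum2 : p + (q + (r + u)) = 0 := by
          rw [hSrep, Finset.sum_insert hnm1, Finset.sum_insert hnm2,
            Finset.sum_insert hnm3, Finset.sum_singleton] at hsum0
          exact hsum0
        have huval : u = p + q + r := by
          linear_combination hsum2 - CharTwo.add_self_eq_zero p
            - CharTwo.add_self_eq_zero q - CharTwo.add_self_eq_zero r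
        have hGsum2 : G p + (G q + (G r + G u)) = 0 := by
          rw [hSrep, Finset.sum_insert hnm1, Finset.sum_insert hnm2,
            Finset.sum_insert hnm3, Finset.sum_singleton] at hGsum0
          exact hGsum0
        refine ⟨⟨h1, h2, h3, ?_⟩, ?_⟩
        · rw [← huval]
          linear_combination hGsum2
        · rw [hSrep, huval]
    rw [hfib]
    have hmem1 : ∀ t ∈ (S ×ˢ S ×ˢ S).filter
        (fun t : F × F × F => t.1 ≠ t.2.1 ∧ t.1 ≠ t.2.2 ∧ t.2.1 ≠ t.2.2),
        t.1 ∈ S := fun t ht => (Finset.mem_product.mp (Finset.mem_filter.mp ht).1).1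
    rw [Finset.card_eq_sum_card_fiberwise hmem1]
    have inner : ∀ p ∈ S,
        (((S ×ˢ S ×ˢ S).filter
          (fun t : F × F × F => t.1 ≠ t.2.1 ∧ t.1 ≠ t.2.2 ∧ t.2.1 ≠ t.2.2)).filter
            (fun t => t.1 = p)).card = 6 := by
      intro p hp
      have hbij : (((S ×ˢ S ×ˢ S).filter
          (fun t : F × F × F => t.1 ≠ t.2.1 ∧ t.1 ≠ t.2.2 ∧ t.2.1 ≠ t.2.2)).filter
            (fun t => t.1 = p)).card = (S.erase p).offDiag.card := by
        apply Finset.card_nbij' (i := fun t : F × F × F => (t.2.1, t.2.2))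
          (j := fun qr : F × F => (p, qr.1, qr.2))
        · intro t ht; obtain ⟨p', q, r⟩ := t
          simp only [Finset.mem_coe, Finset.mem_filter, Finset.mem_product] at ht
          obtain ⟨⟨⟨-, hq, hr⟩, h1, h2, h3⟩, h5⟩ := ht
          subst h5
          exact Finset.mem_offDiag.mpr
            ⟨Finset.mem_erase.mpr ⟨Ne.symm h1, hq⟩,
             Finset.mem_erase.mpr ⟨Ne.symm h2, hr⟩, h3⟩
        · rintro ⟨q, r⟩ hqr
          obtain ⟨hq, hr, hqr'⟩ := Finset.mem_offDiag.mp hqr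
          simp only [Finset.mem_coe, Finset.mem_filter, Finset.mem_product]
          exact ⟨⟨⟨hp, (Finset.mem_erase.mp hq).2, (Finset.mem_erase.mp hr).2⟩,
            Ne.symm (Finset.mem_erase.mp hq).1, Ne.symm (Finset.mem_erase.mp hr).1, hqr'⟩,
            by simp⟩
        · rintro ⟨p', q, r⟩ ht
          simp only [Finset.mem_coe, Finset.mem_filter] at ht
          simp [Prod.ext_iff, ht.2.symm]
        · rintro ⟨q, r⟩ _
          rfl
      rw [hbij, Finset.offDiag_card, Finset.card_erase_of_mem hp, hcard4]
    rw [Finset.sum_congr rfl inner, Finset.sum_const, hcard4, smul_eq_mul]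
  rw [Finset.sum_congr rfl fib24, Finset.sum_const, smul_eq_mul, mul_comm]
end


/-- relation between the APN-defect and the number of vanishing flats. -/
theorem stmt_17 (n : ℕ) (hn : 0 < n)
    [CharP F 2] (hcard : Fintype.card F = 2 ^ n)
    (G : F → F) :
    APNdef G = (2 : ℤ) ^ n - 12 * ((VF G).ncard : ℤ) +
      (∑ a ∈ Finset.univ.erase (0 : F), (3 * wS G a - chi G a)) - 1 := by
  classical
  have hq : (Fintype.card F : ℤ) = 2 ^ n := by exact_mod_cast hcard
  have hcardE : ((Finset.univ.erase (0 : F)).card : ℤ) = (Fintype.card F : ℤ) - 1 := by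
    rw [Finset.card_erase_of_mem (Finset.mem_univ 0), Finset.card_univ,
      Nat.cast_sub Fintype.card_pos, Nat.cast_one]
  have key : 24 * ((VF G).ncard : ℤ)
      = 4 * (∑ a ∈ Finset.univ.erase (0 : F), wS G a)
        + 2 * (∑ a ∈ Finset.univ.erase (0 : F), ((Sset G a).card : ℤ))
        - 2 * (Fintype.card F : ℤ) * ((Fintype.card F : ℤ) - 1) := by
    have h1 : ((Q3 G).card : ℤ) = 24 * ((VF G).ncard : ℤ) := by
      exact_mod_cast congrArg (Nat.cast : ℕ → ℤ) (card_Q3_eq_VF G)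
    have h2 : ((Q3 G).card : ℤ)
        = ∑ a ∈ Finset.univ.erase (0 : F), ((Nset G a).card : ℤ) := by
      rw [card_Q3_eq_P, card_P]
      push_cast
      rfl
    rw [← h1, h2,
      Finset.sum_congr rfl (fun a ha => per_a G (Finset.mem_erase.mp ha).1),
      Finset.sum_sub_distrib, Finset.sum_add_distrib, ← Finset.mul_sum, ← Finset.mul_sum,
      Finset.sum_const, nsmul_eq_mul, hcardE]
    ring
  have hD : Dscr G = (∑ a ∈ Finset.univ.erase (0 : F), ((Sset G a).card : ℤ))
      - (∑ a ∈ Finset.univ.erase (0 : F), wS G a)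
      + (∑ a ∈ Finset.univ.erase (0 : F), chi G a) := by
    rw [Dscr, Finset.sum_add_distrib, Finset.sum_sub_distrib]
  have hR : (∑ a ∈ Finset.univ.erase (0 : F), (3 * wS G a - chi G a))
      = 3 * (∑ a ∈ Finset.univ.erase (0 : F), wS G a)
        - (∑ a ∈ Finset.univ.erase (0 : F), chi G a) := by
    rw [Finset.sum_sub_distrib, ← Finset.mul_sum]
  rw [APNdef, hD, hR, ← hq]
  nlinarith [key, sq_nonneg ((Fintype.card F : ℤ))]



end APNPaper
end

section
/- Let q = 2^n and let G : 𝔽_q → 𝔽_q be a power function G(x) = x^d that is a permutation of 𝔽_q with differential uniformity δ_G ≥ 4. If G is locally-APN (i.e., δ_G(1,b) ≤ 2 for all b ∈ 𝔽_q \ 𝔽_2), then G is not 0-pAPN; that is, there exists a ∈ 𝔽_q^* with δ_G(a, D_aG(0)) ≥ 4. -/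
namespace APNPaper

open Finset

variable {F : Type*} [Field F] [Fintype F] [DecidableEq F]

/-- a locally-APN power permutation with differential uniformity
at least 4 is not `0`-pAPN. -/
theorem stmt_19 (n d : ℕ) (hn : 0 < n)
    [CharP F 2] (hcard : Fintype.card F = 2 ^ n)
    (G : F → F) (hG : ∀ x : F, G x = x ^ d)
    (hperm : Function.Bijective G)
    (hdu : 4 ≤ diffUnif G)
    (hloc : ∀ b : F, b ≠ 0 → b ≠ 1 → delta G 1 b ≤ 2) :
    ∃ a : F, a ≠ 0 ∧ 4 ≤ delta G a (G 0 + G (0 + a)) := by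
  classical
  have hd : d ≠ 0 := by
    intro h
    subst h
    simp only [pow_zero] at hG
    have h10 : (1:F) = 0 := hperm.1 ((hG 1).trans (hG 0).symm)
    exact one_ne_zero h10
  -- scaling lemma
  have key : ∀ a b : F, a ≠ 0 → delta G a b = delta G 1 (b * (a⁻¹) ^ d) := by
    intro a b ha
    unfold delta
    have himg : (Finset.univ.filter fun y : F => G y + G (y + 1) = b * (a⁻¹) ^ d)
        = (Finset.univ.filter fun x : F => G x + G (x + a) = b).image
          (fun x => a⁻¹ * x) := by
      ext y
      simp only [Finset.mem_filter, Finset.mem_univ, true_and, Finset.mem_image]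
      constructor
      · intro hy
        refine ⟨a * y, ?_, by field_simp⟩
        rw [hG, hG] at hy ⊢
        have h1 : a * y + a = a * (y + 1) := by ring
        rw [h1, mul_pow, mul_pow, ← mul_add, hy]
        field_simp
        rw [one_div, inv_pow, mul_comm (a ^ d) b, mul_assoc, mul_inv_cancel₀ (pow_ne_zero _ ha), mul_one]
      · rintro ⟨x, hx, rfl⟩
        rw [hG, hG] at hx ⊢
        have h1 : a⁻¹ * x + 1 = a⁻¹ * (x + a) := by field_simp
        rw [h1, mul_pow, mul_pow, ← mul_add, hx, mul_comm]
    rw [himg, Finset.card_image_of_injective _ (mul_right_injective₀ (inv_ne_zero ha))]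
  -- extract a pair with large delta
  obtain ⟨p, hp, hp4⟩ := (Finset.le_sup_iff (by norm_num : (0:ℕ) < 4)).1 hdu
  obtain ⟨a, b⟩ := p
  rw [Finset.mem_product, Finset.mem_erase] at hp
  have ha : a ≠ 0 := hp.1.1
  rw [key a b ha] at hp4
  set c := b * (a⁻¹) ^ d with hc
  have hc0 : c ≠ 0 := by
    intro h
    rw [h] at hp4
    have : (Finset.univ.filter fun x : F => G x + G (x + 1) = 0) = ∅ := by
      ext x
      simp only [Finset.mem_filter, Finset.mem_univ, true_and, Finset.notMem_empty,
        iff_false]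
      intro hx
      have two : (2:F) = 0 := by
        have := CharP.cast_eq_zero F 2
        exact_mod_cast this
      have hx' : G x = G (x + 1) := by linear_combination hx - G (x + 1) * two
      have := hperm.1 hx'
      exact one_ne_zero (by linear_combination -this)
    rw [delta, this] at hp4
    simp at hp4
  have hc1 : c = 1 := by
    by_contra h
    have := hloc c hc0 h
    omega
  rw [hc1] at hp4
  refine ⟨1, one_ne_zero, ?_⟩
  have h0 : G 0 = 0 := by rw [hG, zero_pow hd]
  have h1 : G (0 + 1) = 1 := by rw [hG]; norm_num
  rw [h0, h1, zero_add]
  exact hp4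


end APNPaper
end
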